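/- arXiv:2207.04024 — 3 statements merged into one kernel-verified Lean document; each statement's English description precedes it below -/
import Mathlib

section
/- Let G be a locally finite, connected metric graph and let K be a closed subspace of H^1(G). Then the embedding of K into L^2(G) is compact if and only if for every ε > 0 there exists a compact (finite) subgraph G_c of G such that ‖f‖_{L^2(G \ G_c)} ≤ ε holds for every f ∈ K with ‖f‖_{H^1(G)} ≤ 1. -/
open MeasureTheory Set Filter
open scoped ENNReal

/-- A metric graph structure on a metric space `X`: a countable collection of edges,
each parametrised by arc length over `[0, len e]`, together with vertices identified
with edge endpoints; the interiors of distinct edges are disjoint, the edges cover `X`,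
and the metric of `X` is the induced path metric (characterised by the fact that the
edge parametrisations are `1`-Lipschitz and `dist x y` is the largest value `u x - u y`
over all continuous, edgewise `1`-Lipschitz functions `u : X → ℝ`). -/
structure MetricGraphOn (X : Type) [MetricSpace X] where
  V : Type
  E : Type
  countableV : Countable V
  countableE : Countable E
  len : E → ℝ
  len_pos : ∀ e, 0 < len e
  edgeMap : E → ℝ → X
  vertexMap : V → X
  endpoint : E → Bool → V
  edgeMap_cont : ∀ e, ContinuousOn (edgeMap e) (Icc 0 (len e))
  edgeMap_injOn : ∀ e, InjOn (edgeMap e) (Ico 0 (len e))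
  edgeMap_zero : ∀ e, edgeMap e 0 = vertexMap (endpoint e false)
  edgeMap_len : ∀ e, edgeMap e (len e) = vertexMap (endpoint e true)
  interior_disjoint : ∀ e e', e ≠ e' → ∀ s ∈ Ioo 0 (len e), ∀ t ∈ Ioo 0 (len e'),
    edgeMap e s ≠ edgeMap e' t
  interior_not_vertex : ∀ e, ∀ s ∈ Ioo 0 (len e), ∀ v, edgeMap e s ≠ vertexMap v
  vertexMap_inj : Function.Injective vertexMap
  cover : ∀ x : X, ∃ e, ∃ t ∈ Icc 0 (len e), edgeMap e t = x
  dist_le : ∀ e, ∀ s ∈ Icc 0 (len e), ∀ t ∈ Icc 0 (len e),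
    dist (edgeMap e s) (edgeMap e t) ≤ |s - t|
  dist_ge : ∀ u : X → ℝ, Continuous u →
    (∀ e, ∀ s ∈ Icc 0 (len e), ∀ t ∈ Icc 0 (len e),
      |u (edgeMap e s) - u (edgeMap e t)| ≤ |s - t|) →
    ∀ x y, u x - u y ≤ dist x y

namespace MetricGraphOn

variable {X : Type} [MetricSpace X]

/-- The (a.e. defined) derivative of `f` along the edge `e`, in the arc-length
parametrisation of the edge. -/
noncomputable def edgeDeriv (G : MetricGraphOn X) (f : X → ℝ) (e : G.E) : ℝ → ℝ :=
  deriv (f ∘ G.edgeMap e)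

/-- The subset of `X` consisting of the (closed) edges in `A`. -/
def subgraphSet (G : MetricGraphOn X) (A : Set G.E) : Set X :=
  ⋃ e ∈ A, G.edgeMap e '' Icc 0 (G.len e)

/-- `∫_e |f|²` along a single edge. -/
noncomputable def edgeMass (G : MetricGraphOn X) (f : X → ℝ) (e : G.E) : ℝ :=
  ∫ t in Ioo 0 (G.len e), (f (G.edgeMap e t)) ^ 2

/-- `∫_e |f'|²` along a single edge. -/
noncomputable def edgeEnergy (G : MetricGraphOn X) (f : X → ℝ) (e : G.E) : ℝ :=
  ∫ t in Ioo 0 (G.len e), (G.edgeDeriv f e t) ^ 2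

/-- Membership in the Sobolev space `H¹` of the subgraph given by the edge set `A`:
continuity on the subgraph, edgewise absolute continuity with square-integrable
derivative, and finiteness of the total `H¹` norm. -/
def MemH1On (G : MetricGraphOn X) (A : Set G.E) (f : X → ℝ) : Prop :=
  ContinuousOn f (G.subgraphSet A) ∧
  (∀ e ∈ A, IntegrableOn (fun t => (G.edgeDeriv f e t) ^ 2) (Ioo 0 (G.len e))) ∧
  (∀ e ∈ A, ∀ t ∈ Icc (0:ℝ) (G.len e),
    f (G.edgeMap e t) = f (G.edgeMap e 0) + ∫ s in Ioo 0 t, G.edgeDeriv f e s) ∧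
  Summable (fun e : A => G.edgeMass f (e : G.E) + G.edgeEnergy f (e : G.E))

/-- Membership in `H¹(G)`. -/
def MemH1 (G : MetricGraphOn X) (f : X → ℝ) : Prop :=
  Continuous f ∧ G.MemH1On Set.univ f

/-- The squared `L²` norm of `f` over the edges in `A`. -/
noncomputable def l2normSqOn (G : MetricGraphOn X) (A : Set G.E) (f : X → ℝ) : ℝ :=
  ∑' e : A, G.edgeMass f (e : G.E)

/-- The squared `L²` norm of `f'` over the edges in `A`. -/
noncomputable def derivNormSqOn (G : MetricGraphOn X) (A : Set G.E) (f : X → ℝ) : ℝ :=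
  ∑' e : A, G.edgeEnergy f (e : G.E)

/-- The squared `L²` norm of `f` on `G`. -/
noncomputable def l2normSq (G : MetricGraphOn X) (f : X → ℝ) : ℝ :=
  G.l2normSqOn Set.univ f

/-- The squared `L²` norm of `f'` on `G` (the Dirichlet energy of `f`). -/
noncomputable def derivNormSq (G : MetricGraphOn X) (f : X → ℝ) : ℝ :=
  G.derivNormSqOn Set.univ f

/-- The squared `H¹` norm of `f`. -/
noncomputable def h1normSq (G : MetricGraphOn X) (f : X → ℝ) : ℝ :=
  G.l2normSq f + G.derivNormSq f

/-- The `L²` inner product on `G`. -/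
noncomputable def l2inner (G : MetricGraphOn X) (f g : X → ℝ) : ℝ :=
  ∑' e : G.E, ∫ t in Ioo 0 (G.len e), f (G.edgeMap e t) * g (G.edgeMap e t)

/-- The Dirichlet form (inner product of derivatives) on `G`. -/
noncomputable def derivInner (G : MetricGraphOn X) (f g : X → ℝ) : ℝ :=
  ∑' e : G.E, ∫ t in Ioo 0 (G.len e), G.edgeDeriv f e t * G.edgeDeriv g e t

/-- The `k`-th min-max (Courant–Fischer) value of the quadratic form
`f ↦ ∫ |f'|²` (over the edges of `A`) with form domain `K`: the infimum over all
`k`-dimensional subspaces of `K` of the largest Rayleigh quotient on the subspace.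
For a self-adjoint Laplacian with purely discrete spectrum this is its `k`-th
eigenvalue (`k = 1` giving the lowest one). -/
noncomputable def eigenOn (G : MetricGraphOn X) (A : Set G.E) (K : Set (X → ℝ))
    (k : ℕ) : ℝ :=
  sInf { μ : ℝ | ∃ φ : Fin k → X → ℝ, (∀ i, φ i ∈ K) ∧
    LinearIndependent ℝ (fun i => (G.subgraphSet A).restrict (φ i)) ∧
    ∀ c : Fin k → ℝ,
      G.derivNormSqOn A (∑ i, c i • φ i) ≤ μ * G.l2normSqOn A (∑ i, c i • φ i) }

/-- The `k`-th eigenvalue `μ_k(G)` of the Neumann extension (standard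
continuity–Kirchhoff conditions at all vertices, Neumann conditions at all ends). -/
noncomputable def neumannEigen (G : MetricGraphOn X) (k : ℕ) : ℝ :=
  G.eigenOn Set.univ {f | G.MemH1 f} k

/-- `f` vanishes at the point `y` of the completion of `X`. -/
def VanishesAt (f : X → ℝ) (y : UniformSpace.Completion X) : Prop :=
  Tendsto f (comap ((↑) : X → UniformSpace.Completion X) (nhds y)) (nhds 0)

/-- Membership in `H¹₀(G; 𝔙)`: `H¹`-functions vanishing on the set `𝔙` of
vertices and/or ends (viewed inside the completion of `X`). -/
def H10Mem (G : MetricGraphOn X) (𝔙 : Set (UniformSpace.Completion X))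
    (f : X → ℝ) : Prop :=
  G.MemH1 f ∧ ∀ y ∈ 𝔙, VanishesAt f y

/-- The `k`-th eigenvalue `λ_k(G; 𝔙)` of the Laplacian with Dirichlet conditions
on `𝔙` and standard (continuity–Kirchhoff/Neumann) conditions elsewhere. -/
noncomputable def dirichletEigen (G : MetricGraphOn X)
    (𝔙 : Set (UniformSpace.Completion X)) (k : ℕ) : ℝ :=
  G.eigenOn Set.univ {f | G.H10Mem 𝔙 f} k

/-- The set of (topological = graph) ends of `G`, realised as the points of the
completion of `X` that do not belong to `X`. -/
def Ends (_G : MetricGraphOn X) : Set (UniformSpace.Completion X) :=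
  {y | y ∉ Set.range ((↑) : X → UniformSpace.Completion X)}

/-- The set of vertices of `G`, viewed inside the completion of `X`. -/
def vertexPoints (G : MetricGraphOn X) : Set (UniformSpace.Completion X) :=
  Set.range (fun v => ((G.vertexMap v : X) : UniformSpace.Completion X))

/-- The degree of a vertex (loops counted twice). -/
noncomputable def degree (G : MetricGraphOn X) (v : G.V) : ℕ :=
  {p : G.E × Bool | G.endpoint p.1 p.2 = v}.ncard

/-- `G` is locally finite: every vertex has finite degree. -/
def LocallyFinite (G : MetricGraphOn X) : Prop :=
  ∀ v : G.V, {p : G.E × Bool | G.endpoint p.1 p.2 = v}.Finite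

/-- A cycle in `G`: a compact subset homeomorphic to a circle. -/
def IsCycle (_G : MetricGraphOn X) (C : Set X) : Prop :=
  IsCompact C ∧ Nonempty (C ≃ₜ Metric.sphere (0 : ℝ × ℝ) 1)

/-- `G` has (first) Betti number `β`: there is a minimal finite family of `β` cycles
whose union contains every cycle of `G`. -/
def HasBettiNumber (G : MetricGraphOn X) (β : ℕ) : Prop :=
  ∃ 𝒞 : Finset (Set X), 𝒞.card = β ∧ (∀ C ∈ 𝒞, G.IsCycle C) ∧
    (∀ C, G.IsCycle C → C ⊆ ⋃ C' ∈ 𝒞, C') ∧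
    ∀ 𝒞' : Finset (Set X), (∀ C ∈ 𝒞', G.IsCycle C) →
      (∀ C, G.IsCycle C → C ⊆ ⋃ C' ∈ 𝒞', C') → β ≤ 𝒞'.card

/-- The embedding of `K ⊆ H¹(G)` into `L²(G)` is compact: every sequence in `K`
bounded in the `H¹` norm has a subsequence which is Cauchy in the `L²` norm. -/
def CompactlyEmbedded (G : MetricGraphOn X) (K : Set (X → ℝ)) : Prop :=
  ∀ u : ℕ → X → ℝ, (∀ n, u n ∈ K) → (∀ n, G.h1normSq (u n) ≤ 1) →
    ∃ φ : ℕ → ℕ, StrictMono φ ∧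
      ∀ ε : ℝ, 0 < ε → ∃ N, ∀ m, N ≤ m → ∀ n, N ≤ n →
        G.l2normSq (u (φ m) - u (φ n)) ≤ ε

/-- The self-adjoint operator with form `f ↦ ∫ |f'|²` and form domain `K` has
purely discrete spectrum (equivalently, compact resolvent): its min-max values
tend to `+∞`. -/
def HasPurelyDiscreteSpectrumOn (G : MetricGraphOn X) (K : Set (X → ℝ)) : Prop :=
  Tendsto (fun k => G.eigenOn Set.univ K k) atTop atTop

/-- The volume (total length) of a subset `S` of `G`. -/
noncomputable def vol (G : MetricGraphOn X) (S : Set X) : ℝ≥0∞ :=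
  ∑' e : G.E, volume (G.edgeMap e ⁻¹' S ∩ Ioo 0 (G.len e))

/-- The set of vertices incident to some edge in `A`. -/
def vertexSetOf (G : MetricGraphOn X) (A : Set G.E) : Set G.V :=
  {v | ∃ e ∈ A, ∃ b, G.endpoint e b = v}

/-- Membership in `H¹₀(G)`, the closure in `H¹(G)` of the compactly supported
`H¹` functions (the form domain of the Friedrichs extension). -/
def H100Mem (G : MetricGraphOn X) (f : X → ℝ) : Prop :=
  G.MemH1 f ∧ ∃ u : ℕ → X → ℝ, (∀ n, G.MemH1 (u n) ∧ HasCompactSupport (u n)) ∧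
    Tendsto (fun n => G.h1normSq (f - u n)) atTop (nhds 0)

/-- The `k`-th eigenvalue `λ_k(G)` of the Friedrichs extension. -/
noncomputable def friedrichsEigen (G : MetricGraphOn X) (k : ℕ) : ℝ :=
  G.eigenOn Set.univ {f | G.H100Mem f} k

end MetricGraphOn


section AuxStatement0

open MetricGraphOn

variable {X : Type} [MetricSpace X] (G : MetricGraphOn X)

private lemma aux_contOn {f : X → ℝ} (hf : Continuous f) (e : G.E) :
    ContinuousOn (fun t => f (G.edgeMap e t)) (Icc 0 (G.len e)) :=
  hf.comp_continuousOn (G.edgeMap_cont e)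

private lemma aux_sq_integrableOn {f : X → ℝ} (hf : Continuous f) (e : G.E) :
    IntegrableOn (fun t => f (G.edgeMap e t) ^ 2) (Ioo 0 (G.len e)) := by
  have h : IntegrableOn (fun t => f (G.edgeMap e t) ^ 2) (Icc 0 (G.len e)) :=
    ContinuousOn.integrableOn_compact isCompact_Icc ((aux_contOn G hf e).pow 2)
  exact h.mono_set Ioo_subset_Icc_self

private lemma aux_mass_nonneg (f : X → ℝ) (e : G.E) : 0 ≤ G.edgeMass f e :=
  integral_nonneg fun _ => sq_nonneg _

private lemma aux_energy_nonneg (f : X → ℝ) (e : G.E) : 0 ≤ G.edgeEnergy f e :=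
  integral_nonneg fun _ => sq_nonneg _

private lemma aux_mass_sub_le {f g : X → ℝ} (hf : Continuous f) (hg : Continuous g) (e : G.E) :
    G.edgeMass (f - g) e ≤ 2 * G.edgeMass f e + 2 * G.edgeMass g e := by
  have hint1 : IntegrableOn (fun t => (f - g) (G.edgeMap e t) ^ 2) (Ioo 0 (G.len e)) :=
    aux_sq_integrableOn G (hf.sub hg) e
  have hf2 := aux_sq_integrableOn G hf e
  have hg2 := aux_sq_integrableOn G hg e
  have hint2 : IntegrableOn
      (fun t => 2 * f (G.edgeMap e t) ^ 2 + 2 * g (G.edgeMap e t) ^ 2) (Ioo 0 (G.len e)) :=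
    (hf2.const_mul 2).add (hg2.const_mul 2)
  have h := setIntegral_mono_on hint1 hint2 measurableSet_Ioo (fun t _ => by
    simp only [Pi.sub_apply]
    nlinarith [sq_nonneg (f (G.edgeMap e t) + g (G.edgeMap e t))])
  calc G.edgeMass (f - g) e
      ≤ ∫ t in Ioo 0 (G.len e), (2 * f (G.edgeMap e t) ^ 2 + 2 * g (G.edgeMap e t) ^ 2) := h
    _ = 2 * G.edgeMass f e + 2 * G.edgeMass g e := by
        rw [integral_add (hf2.const_mul 2) (hg2.const_mul 2), integral_const_mul,
          integral_const_mul]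
        rfl

private lemma aux_mass_le_sub {f g : X → ℝ} (hf : Continuous f) (hg : Continuous g) (e : G.E) :
    G.edgeMass f e ≤ 2 * G.edgeMass (f - g) e + 2 * G.edgeMass g e := by
  have hint1 := aux_sq_integrableOn G hf e
  have hfg2 := aux_sq_integrableOn G (hf.sub hg) e
  have hg2 := aux_sq_integrableOn G hg e
  have hint2 : IntegrableOn
      (fun t => 2 * (f - g) (G.edgeMap e t) ^ 2 + 2 * g (G.edgeMap e t) ^ 2) (Ioo 0 (G.len e)) :=
    (hfg2.const_mul 2).add (hg2.const_mul 2)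
  have hfg2' : IntegrableOn (fun t => 2 * (f - g) (G.edgeMap e t) ^ 2)
      (Ioo 0 (G.len e)) := hfg2.const_mul 2
  have hg2' : IntegrableOn (fun t => 2 * g (G.edgeMap e t) ^ 2) (Ioo 0 (G.len e)) :=
    hg2.const_mul 2
  have h := setIntegral_mono_on hint1 hint2 measurableSet_Ioo (fun t _ => by
    simp only [Pi.sub_apply]
    nlinarith [sq_nonneg (f (G.edgeMap e t) - 2 * g (G.edgeMap e t))])
  calc G.edgeMass f e
      ≤ ∫ t in Ioo 0 (G.len e),
          (2 * (f - g) (G.edgeMap e t) ^ 2 + 2 * g (G.edgeMap e t) ^ 2) := h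
    _ = 2 * G.edgeMass (f - g) e + 2 * G.edgeMass g e := by
        rw [integral_add hfg2' hg2', integral_const_mul, integral_const_mul]
        rfl

private lemma aux_cs {g : ℝ → ℝ} {a b : ℝ} (hab : a ≤ b)
    (hmeas : AEStronglyMeasurable g (volume.restrict (Ioo a b)))
    (hg2 : IntegrableOn (fun t => g t ^ 2) (Ioo a b)) :
    (∫ t in Ioo a b, g t) ^ 2 ≤ (b - a) * ∫ t in Ioo a b, g t ^ 2 := by
  rcases eq_or_lt_of_le hab with h | h
  · subst h; simp
  have hfin : volume (Ioo a b) < ⊤ := measure_Ioo_lt_top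
  have hconst : ∀ c : ℝ, IntegrableOn (fun _ => c) (Ioo a b) := fun c =>
    (integrableOn_const_iff (by finiteness)).mpr (Or.inr hfin)
  have hg1 : IntegrableOn g (Ioo a b) := by
    have hc1 : IntegrableOn (fun t => 1 + g t ^ 2) (Ioo a b) := (hconst 1).add hg2
    refine Integrable.mono' hc1 hmeas (Eventually.of_forall fun t => ?_)
    rw [Real.norm_eq_abs]
    nlinarith [sq_abs (g t), sq_nonneg (|g t| - 1)]
  set M := b - a with hM
  set I := ∫ t in Ioo a b, g t with hI
  set Q := ∫ t in Ioo a b, g t ^ 2 with hQ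
  have hM0 : 0 < M := sub_pos.mpr h
  have key : (0:ℝ) ≤ ∫ t in Ioo a b, (M * g t - I) ^ 2 := integral_nonneg fun t => sq_nonneg _
  have expand : ∫ t in Ioo a b, (M * g t - I) ^ 2
      = M ^ 2 * Q - 2 * M * I * I + I ^ 2 * M := by
    have e1 : (fun t => (M * g t - I) ^ 2)
        = fun t => (M ^ 2 * g t ^ 2 - 2 * M * I * g t) + I ^ 2 := by
      funext t; ring
    have hq : IntegrableOn (fun t => M ^ 2 * g t ^ 2) (Ioo a b) := hg2.const_mul (M ^ 2)
    have hl : IntegrableOn (fun t => 2 * M * I * g t) (Ioo a b) := hg1.const_mul (2 * M * I)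
    have hql : IntegrableOn (fun t => M ^ 2 * g t ^ 2 - 2 * M * I * g t) (Ioo a b) := hq.sub hl
    rw [e1, integral_add hql (hconst _), integral_sub hq hl,
      integral_const_mul, integral_const_mul, setIntegral_const]
    have hvol : (volume (Ioo a b)).toReal = M := by
      rw [Real.volume_Ioo, ENNReal.toReal_ofReal (by linarith)]
    rw [measureReal_def, hvol, smul_eq_mul, ← hI, ← hQ]
    ring
  rw [expand] at key
  nlinarith [key, hM0, sq_nonneg I]


private lemma aux_summable {f : X → ℝ} (hf : G.MemH1 f) :
    Summable (fun e => G.edgeMass f e + G.edgeEnergy f e) := by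
  have h : Summable ((fun e => G.edgeMass f e + G.edgeEnergy f e) ∘
      (Subtype.val : ↥(univ : Set G.E) → G.E)) := hf.2.2.2.2
  rwa [summable_subtype_iff_indicator, Set.indicator_univ] at h

private lemma aux_summable_mass {f : X → ℝ} (hf : G.MemH1 f) : Summable (G.edgeMass f) :=
  Summable.of_nonneg_of_le (fun e => aux_mass_nonneg G f e)
    (fun e => le_add_of_nonneg_right (aux_energy_nonneg G f e)) (aux_summable G hf)

private lemma aux_summable_energy {f : X → ℝ} (hf : G.MemH1 f) : Summable (G.edgeEnergy f) :=
  Summable.of_nonneg_of_le (fun e => aux_energy_nonneg G f e)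
    (fun e => le_add_of_nonneg_left (aux_mass_nonneg G f e)) (aux_summable G hf)

private lemma aux_l2normSq_eq (f : X → ℝ) : G.l2normSq f = ∑' e, G.edgeMass f e :=
  tsum_univ _

private lemma aux_h1_eq {f : X → ℝ} (hf : G.MemH1 f) :
    G.h1normSq f = ∑' e, (G.edgeMass f e + G.edgeEnergy f e) := by
  show (∑' e : (univ : Set G.E), G.edgeMass f ↑e) + (∑' e : (univ : Set G.E), G.edgeEnergy f ↑e)
      = _
  rw [tsum_univ, tsum_univ, ← Summable.tsum_add (aux_summable_mass G hf) (aux_summable_energy G hf)]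

private lemma aux_h1_nonneg (f : X → ℝ) : 0 ≤ G.h1normSq f :=
  add_nonneg (tsum_nonneg fun e => aux_mass_nonneg G f _)
    (tsum_nonneg fun e => aux_energy_nonneg G f _)

private lemma aux_mass_le_h1 {f : X → ℝ} (hf : G.MemH1 f) (e : G.E) :
    G.edgeMass f e ≤ G.h1normSq f := by
  rw [aux_h1_eq G hf]
  calc G.edgeMass f e ≤ G.edgeMass f e + G.edgeEnergy f e :=
        le_add_of_nonneg_right (aux_energy_nonneg G f e)
    _ ≤ _ := Summable.le_tsum (aux_summable G hf) e fun j _ =>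
        add_nonneg (aux_mass_nonneg G f j) (aux_energy_nonneg G f j)

private lemma aux_energy_le_h1 {f : X → ℝ} (hf : G.MemH1 f) (e : G.E) :
    G.edgeEnergy f e ≤ G.h1normSq f := by
  rw [aux_h1_eq G hf]
  calc G.edgeEnergy f e ≤ G.edgeMass f e + G.edgeEnergy f e :=
        le_add_of_nonneg_left (aux_mass_nonneg G f e)
    _ ≤ _ := Summable.le_tsum (aux_summable G hf) e fun j _ =>
        add_nonneg (aux_mass_nonneg G f j) (aux_energy_nonneg G f j)

private lemma aux_tsum_mass_le_h1 {f : X → ℝ} (hf : G.MemH1 f) :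
    ∑' e, G.edgeMass f e ≤ G.h1normSq f := by
  rw [aux_h1_eq G hf]
  exact Summable.tsum_le_tsum (fun e => le_add_of_nonneg_right (aux_energy_nonneg G f e))
    (aux_summable_mass G hf) (aux_summable G hf)

private lemma aux_tsum_mono_set {ι : Type*} {g : ι → ℝ} (hg : ∀ i, 0 ≤ g i)
    (hsum : Summable g) {B C : Set ι} (hBC : B ⊆ C) :
    ∑' i : B, g ↑i ≤ ∑' i : C, g ↑i := by
  rw [tsum_subtype, tsum_subtype]
  exact Summable.tsum_le_tsum (fun i => indicator_le_indicator_of_subset hBC hg i)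
    (hsum.indicator B) (hsum.indicator C)

private lemma aux_summable_mass_sub {f g : X → ℝ} (hf : Continuous f) (hg : Continuous g)
    (hmf : Summable (G.edgeMass f)) (hmg : Summable (G.edgeMass g)) :
    Summable (G.edgeMass (f - g)) :=
  Summable.of_nonneg_of_le (fun e => aux_mass_nonneg G _ e)
    (fun e => aux_mass_sub_le G hf hg e) ((hmf.mul_left 2).add (hmg.mul_left 2))

private lemma aux_tail_sub_le {f g : X → ℝ} (hf : Continuous f) (hg : Continuous g)
    (hmf : Summable (G.edgeMass f)) (hmg : Summable (G.edgeMass g)) (B : Set G.E) :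
    ∑' e : B, G.edgeMass (f - g) ↑e
      ≤ 2 * (∑' e : B, G.edgeMass f ↑e) + 2 * (∑' e : B, G.edgeMass g ↑e) := by
  have h1 : ∑' e : B, G.edgeMass (f - g) ↑e
      ≤ ∑' e : B, (2 * G.edgeMass f ↑e + 2 * G.edgeMass g ↑e) :=
    Summable.tsum_le_tsum (fun e => aux_mass_sub_le G hf hg ↑e)
      ((aux_summable_mass_sub G hf hg hmf hmg).subtype B)
      (((hmf.mul_left 2).add (hmg.mul_left 2)).subtype B)
  refine h1.trans (le_of_eq ?_)
  have s1 : Summable (fun e : B => 2 * G.edgeMass f ↑e) := (hmf.subtype B).mul_left 2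
  have s2 : Summable (fun e : B => 2 * G.edgeMass g ↑e) := (hmg.subtype B).mul_left 2
  rw [Summable.tsum_add s1 s2, tsum_mul_left, tsum_mul_left]

private lemma aux_tail_le_sub {f g : X → ℝ} (hf : Continuous f) (hg : Continuous g)
    (hmf : Summable (G.edgeMass f)) (hmg : Summable (G.edgeMass g)) (B : Set G.E) :
    ∑' e : B, G.edgeMass f ↑e
      ≤ 2 * (∑' e : B, G.edgeMass (f - g) ↑e) + 2 * (∑' e : B, G.edgeMass g ↑e) := by
  have hmfg := aux_summable_mass_sub G hf hg hmf hmg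
  have h1 : ∑' e : B, G.edgeMass f ↑e
      ≤ ∑' e : B, (2 * G.edgeMass (f - g) ↑e + 2 * G.edgeMass g ↑e) :=
    Summable.tsum_le_tsum (fun e => aux_mass_le_sub G hf hg ↑e) (hmf.subtype B)
      (((hmfg.mul_left 2).add (hmg.mul_left 2)).subtype B)
  refine h1.trans (le_of_eq ?_)
  have s1 : Summable (fun e : B => 2 * G.edgeMass (f - g) ↑e) := (hmfg.subtype B).mul_left 2
  have s2 : Summable (fun e : B => 2 * G.edgeMass g ↑e) := (hmg.subtype B).mul_left 2
  rw [Summable.tsum_add s1 s2, tsum_mul_left, tsum_mul_left]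

private lemma aux_deriv_integrableOn {f : X → ℝ} (hf : G.MemH1 f) (e : G.E) :
    IntegrableOn (G.edgeDeriv f e) (Ioo 0 (G.len e)) := by
  have hmeas : Measurable (G.edgeDeriv f e) := measurable_deriv _
  have hg2 := hf.2.2.1 e (mem_univ e)
  have hfin : volume (Ioo (0:ℝ) (G.len e)) < ⊤ := measure_Ioo_lt_top
  have hc1 : IntegrableOn (fun t => 1 + G.edgeDeriv f e t ^ 2) (Ioo 0 (G.len e)) :=
    ((integrableOn_const_iff (by finiteness)).mpr (Or.inr hfin)).add hg2
  refine Integrable.mono' hc1 hmeas.aestronglyMeasurable (Eventually.of_forall fun t => ?_)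
  rw [Real.norm_eq_abs]
  nlinarith [sq_abs (G.edgeDeriv f e t), sq_nonneg (|G.edgeDeriv f e t| - 1)]

private lemma aux_ftc_diff {f : X → ℝ} (hf : G.MemH1 f) (e : G.E) {s t : ℝ}
    (h0 : 0 ≤ s) (hst : s ≤ t) (htL : t ≤ G.len e) :
    f (G.edgeMap e t) - f (G.edgeMap e s) = ∫ r in Ioo s t, G.edgeDeriv f e r := by
  have hIcc : IntegrableOn (G.edgeDeriv f e) (Icc 0 (G.len e)) := by
    rw [integrableOn_Icc_iff_integrableOn_Ioo]; exact aux_deriv_integrableOn G hf e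
  have hii : ∀ c d : ℝ, 0 ≤ c → c ≤ d → d ≤ G.len e →
      IntervalIntegrable (G.edgeDeriv f e) volume c d := fun c d hc hcd hd =>
    (hIcc.mono_set (by rw [uIcc_of_le hcd]; exact Icc_subset_Icc hc hd)).intervalIntegrable
  have hftc := hf.2.2.2.1 e (mem_univ e)
  have h1 := hftc t ⟨le_trans h0 hst, htL⟩
  have h2 := hftc s ⟨h0, le_trans hst htL⟩
  have conv : ∀ c : ℝ, 0 ≤ c →
      (∫ r in Ioo 0 c, G.edgeDeriv f e r) = ∫ r in (0:ℝ)..c, G.edgeDeriv f e r := fun c h0c => by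
    rw [intervalIntegral.integral_of_le h0c, integral_Ioc_eq_integral_Ioo]
  have conv2 : (∫ r in Ioo s t, G.edgeDeriv f e r) = ∫ r in s..t, G.edgeDeriv f e r := by
    rw [intervalIntegral.integral_of_le hst, integral_Ioc_eq_integral_Ioo]
  have hsub := intervalIntegral.integral_interval_sub_left
    (hii 0 t (le_refl 0) (le_trans h0 hst) htL) (hii 0 s (le_refl 0) h0 (le_trans hst htL))
  rw [h1, h2, conv2, ← hsub, conv t (le_trans h0 hst), conv s h0]
  ring

private lemma aux_holder_le {f : X → ℝ} (hf : G.MemH1 f) (e : G.E) {s t : ℝ}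
    (hs : s ∈ Icc 0 (G.len e)) (ht : t ∈ Icc 0 (G.len e)) (hst : s ≤ t) :
    (f (G.edgeMap e t) - f (G.edgeMap e s)) ^ 2 ≤ (t - s) * G.edgeEnergy f e := by
  rw [aux_ftc_diff G hf e hs.1 hst ht.2]
  have hint := hf.2.2.1 e (mem_univ e)
  have hg2 : IntegrableOn (fun r => G.edgeDeriv f e r ^ 2) (Ioo s t) :=
    hint.mono_set (Ioo_subset_Ioo hs.1 ht.2)
  have hcs := aux_cs hst (measurable_deriv _).aestronglyMeasurable.restrict hg2
  refine hcs.trans ?_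
  have hmono : (∫ r in Ioo s t, G.edgeDeriv f e r ^ 2) ≤ G.edgeEnergy f e :=
    setIntegral_mono_set hint (Eventually.of_forall fun r => sq_nonneg _)
      (Ioo_subset_Ioo hs.1 ht.2).eventuallyLE
  exact mul_le_mul_of_nonneg_left hmono (sub_nonneg.mpr hst)

private lemma aux_holder {f : X → ℝ} (hf : G.MemH1 f) (e : G.E) {s t : ℝ}
    (hs : s ∈ Icc 0 (G.len e)) (ht : t ∈ Icc 0 (G.len e)) :
    (f (G.edgeMap e t) - f (G.edgeMap e s)) ^ 2 ≤ |t - s| * G.edgeEnergy f e := by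
  rcases le_total s t with h | h
  · rw [abs_of_nonneg (sub_nonneg.mpr h)]; exact aux_holder_le G hf e hs ht h
  · rw [abs_of_nonpos (sub_nonpos.mpr h)]
    have := aux_holder_le G hf e ht hs h
    nlinarith [this]


private lemma aux_sample_bound {f : X → ℝ} (hf : G.MemH1 f) (e : G.E)
    (hm : G.edgeMass f e ≤ 1) (hE : G.edgeEnergy f e ≤ 1) {s : ℝ}
    (hs : s ∈ Icc 0 (G.len e)) :
    f (G.edgeMap e s) ^ 2 ≤ 2 * G.len e + 8 / G.len e := by
  have hL := G.len_pos e
  have hex : ∃ t ∈ Ioo 0 (G.len e),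
      f (G.edgeMap e t) ^ 2 ≤ 2 * (G.edgeMass f e + 1) / G.len e := by
    by_contra hcon
    push_neg at hcon
    have hint := aux_sq_integrableOn G hf.1 e
    have hconst : IntegrableOn (fun _ => 2 * (G.edgeMass f e + 1) / G.len e)
        (Ioo 0 (G.len e)) volume := (integrableOn_const_iff (by finiteness)).mpr (Or.inr measure_Ioo_lt_top)
    have hmono := setIntegral_mono_on hconst hint measurableSet_Ioo
      (fun t htt => (hcon t htt).le)
    rw [setIntegral_const, measureReal_def, Real.volume_Ioo, ENNReal.toReal_ofReal (by linarith),
      smul_eq_mul] at hmono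
    have hmass0 := aux_mass_nonneg G f e
    have hh : (G.len e - 0) * (2 * (G.edgeMass f e + 1) / G.len e)
        = 2 * (G.edgeMass f e + 1) := by field_simp; ring
    rw [hh] at hmono
    have : (∫ t in Ioo 0 (G.len e), f (G.edgeMap e t) ^ 2) = G.edgeMass f e := rfl
    rw [this] at hmono
    linarith
  obtain ⟨t₀, ht₀, hft₀⟩ := hex
  have ht₀' : t₀ ∈ Icc 0 (G.len e) := ⟨ht₀.1.le, ht₀.2.le⟩
  have hh := aux_holder G hf e ht₀' hs
  have habs : |s - t₀| ≤ G.len e :=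
    abs_le.mpr ⟨by linarith [hs.1, ht₀.2], by linarith [hs.2, ht₀.1]⟩
  have key : (f (G.edgeMap e s) - f (G.edgeMap e t₀)) ^ 2 ≤ G.len e := by
    calc (f (G.edgeMap e s) - f (G.edgeMap e t₀)) ^ 2 ≤ |s - t₀| * G.edgeEnergy f e := hh
      _ ≤ G.len e * 1 := mul_le_mul habs hE (aux_energy_nonneg G f e) hL.le
      _ = G.len e := mul_one _
  have h4 : 2 * (G.edgeMass f e + 1) / G.len e ≤ 4 / G.len e :=
    (div_le_div_iff_of_pos_right hL).mpr (by linarith)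
  have hft₀' : f (G.edgeMap e t₀) ^ 2 ≤ 4 / G.len e := hft₀.trans h4
  have h8 : 2 * (4 / G.len e) = 8 / G.len e := by ring
  nlinarith [key, hft₀', h8, sq_nonneg (f (G.edgeMap e s) - 2 * f (G.edgeMap e t₀))]

private lemma aux_edge_est {f g : X → ℝ} (hf : G.MemH1 f) (hg : G.MemH1 g) (e : G.E)
    (hEf : G.edgeEnergy f e ≤ 1) (hEg : G.edgeEnergy g e ≤ 1) (N : ℕ) (hN : 0 < N) :
    G.edgeMass (f - g) e ≤
      3 * G.len e *
        (∑ i : Fin N,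
          ((f - g) (G.edgeMap e (min (G.len e) ((i : ℕ) * G.len e / N)))) ^ 2)
        + 6 * G.len e ^ 2 / N := by
  have hL := G.len_pos e
  have hNpos : (0:ℝ) < N := by exact_mod_cast hN
  set L := G.len e with hLdef
  set S := ∑ i : Fin N, ((f - g) (G.edgeMap e (min L ((i : ℕ) * L / N)))) ^ 2 with hS
  have hS0 : 0 ≤ S := Finset.sum_nonneg fun i _ => sq_nonneg _
  have hpt : ∀ t ∈ Ioo (0:ℝ) L, ((f - g) (G.edgeMap e t)) ^ 2 ≤ 3 * S + 6 * (L / N) := by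
    intro t ht
    set i : ℕ := ⌊t * N / L⌋₊ with hi
    have htN : 0 ≤ t * N / L := div_nonneg (mul_nonneg ht.1.le (Nat.cast_nonneg N)) hL.le
    have hiN : i < N := by
      rw [hi, Nat.floor_lt htN, div_lt_iff₀ hL]
      calc t * N < L * N := mul_lt_mul_of_pos_right ht.2 hNpos
        _ = (N : ℝ) * L := by ring
    have hiR : (i : ℝ) < N := by exact_mod_cast hiN
    set ti : ℝ := i * L / N with hti
    have hle : ti ≤ t := by
      rw [hti, div_le_iff₀ hNpos]
      have h1 := Nat.floor_le htN
      calc (i : ℝ) * L ≤ (t * N / L) * L := by nlinarith [h1]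
        _ = t * N := by field_simp
    have hgap : t - ti ≤ L / N := by
      have h2 := Nat.lt_floor_add_one (t * N / L)
      have h3 : t * N < ((i : ℝ) + 1) * L := by
        rw [hi]
        nlinarith [(div_lt_iff₀ hL).mp h2]
      rw [hti, sub_le_iff_le_add, ← add_div, le_div_iff₀ hNpos]
      nlinarith [h3]
    have hti0 : 0 ≤ ti := by positivity
    have htiL : ti ≤ L := by
      rw [hti, div_le_iff₀ hNpos]
      nlinarith [hiR, hL]
    have hti_mem : ti ∈ Icc (0:ℝ) L := ⟨hti0, htiL⟩
    have ht_mem : t ∈ Icc (0:ℝ) L := ⟨ht.1.le, ht.2.le⟩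
    have hf1 : (f (G.edgeMap e t) - f (G.edgeMap e ti)) ^ 2 ≤ L / N := by
      calc (f (G.edgeMap e t) - f (G.edgeMap e ti)) ^ 2
          ≤ |t - ti| * G.edgeEnergy f e := aux_holder G hf e hti_mem ht_mem
        _ ≤ (L / N) * 1 := by
            refine mul_le_mul ?_ hEf (aux_energy_nonneg G f e) (by positivity)
            rw [abs_of_nonneg (by linarith)]; exact hgap
        _ = L / N := mul_one _
    have hg1 : (g (G.edgeMap e t) - g (G.edgeMap e ti)) ^ 2 ≤ L / N := by
      calc (g (G.edgeMap e t) - g (G.edgeMap e ti)) ^ 2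
          ≤ |t - ti| * G.edgeEnergy g e := aux_holder G hg e hti_mem ht_mem
        _ ≤ (L / N) * 1 := by
            refine mul_le_mul ?_ hEg (aux_energy_nonneg G g e) (by positivity)
            rw [abs_of_nonneg (by linarith)]; exact hgap
        _ = L / N := mul_one _
    have hmin : min L ti = ti := min_eq_right htiL
    have hterm : ((f - g) (G.edgeMap e ti)) ^ 2 ≤ S := by
      have h := Finset.single_le_sum
        (f := fun j : Fin N => ((f - g) (G.edgeMap e (min L ((j : ℕ) * L / N)))) ^ 2)
        (fun j _ => sq_nonneg _) (Finset.mem_univ (⟨i, hiN⟩ : Fin N))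
      rw [hS]
      simpa [hmin, ← hti] using h
    have hsplit : (f - g) (G.edgeMap e t) = (f - g) (G.edgeMap e ti)
        + (f (G.edgeMap e t) - f (G.edgeMap e ti)) - (g (G.edgeMap e t) - g (G.edgeMap e ti)) := by
      simp only [Pi.sub_apply]; ring
    rw [hsplit]
    nlinarith [hf1, hg1, hterm, hS0,
      sq_nonneg ((f - g) (G.edgeMap e ti) - (f (G.edgeMap e t) - f (G.edgeMap e ti))),
      sq_nonneg ((f - g) (G.edgeMap e ti) + (g (G.edgeMap e t) - g (G.edgeMap e ti))),
      sq_nonneg ((f (G.edgeMap e t) - f (G.edgeMap e ti)) + (g (G.edgeMap e t) - g (G.edgeMap e ti)))]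
  have hintF := aux_sq_integrableOn G (hf.1.sub hg.1) e
  have hconst : IntegrableOn (fun _ => 3 * S + 6 * (L / N)) (Ioo 0 L) volume :=
    (integrableOn_const_iff (by finiteness)).mpr (Or.inr measure_Ioo_lt_top)
  have hmono := setIntegral_mono_on hintF hconst measurableSet_Ioo hpt
  calc G.edgeMass (f - g) e ≤ ∫ _ in Ioo 0 L, (3 * S + 6 * (L / N)) := hmono
    _ = (volume (Ioo (0:ℝ) L)).toReal • (3 * S + 6 * (L / N)) := setIntegral_const _
    _ = L * (3 * S + 6 * (L / N)) := by
        rw [Real.volume_Ioo, ENNReal.toReal_ofReal (by linarith), sub_zero, smul_eq_mul]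
    _ ≤ 3 * L * S + 6 * L ^ 2 / N := le_of_eq (by field_simp)

end AuxStatement0

set_option maxHeartbeats 1000000 in
open MetricGraphOn in
/-- Kolmogorov–Riesz-type criterion. Let `G` be a locally finite,
connected metric graph and `K` a closed subspace of `H¹(G)`. Then the embedding of
`K` into `L²(G)` is compact if and only if for every `ε > 0` there is a compact
(finite) subgraph `G_c` of `G` (given by a finite edge set `A`) such that
`‖f‖_{L²(G \ G_c)} ≤ ε` for every `f ∈ K` with `‖f‖_{H¹(G)} ≤ 1`. -/
theorem statement0 (X : Type) [MetricSpace X] (G : MetricGraphOn X)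
    (hlf : G.LocallyFinite) (hconn : ConnectedSpace X)
    (K : Set (X → ℝ)) (hK1 : K ⊆ {f | G.MemH1 f})
    (hKsub : ∃ p : Submodule ℝ (X → ℝ), K = ↑p)
    (hKclosed : ∀ (u : ℕ → X → ℝ) (f : X → ℝ), (∀ n, u n ∈ K) → G.MemH1 f →
      Tendsto (fun n => G.h1normSq (f - u n)) atTop (nhds 0) → f ∈ K) :
    G.CompactlyEmbedded K ↔
      ∀ ε : ℝ, 0 < ε → ∃ A : Set G.E, A.Finite ∧
        ∀ f ∈ K, Real.sqrt (G.h1normSq f) ≤ 1 →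
          Real.sqrt (G.l2normSqOn {e | e ∉ A} f) ≤ ε := by
  classical
  haveI : Countable G.E := G.countableE
  constructor
  · -- forward direction
    intro hce ε hε
    by_contra hcon
    push_neg at hcon
    obtain ⟨enc, henc⟩ := Countable.exists_injective_nat G.E
    set Adef : ℕ → Set G.E := fun k => {e | enc e < k} with hAdef
    have hAfin : ∀ k, (Adef k).Finite := fun k => (Set.finite_Iio k).preimage henc.injOn
    choose fs hfsK hfs1 hfs2 using fun k => hcon (Adef k) (hAfin k)
    have hh1 : ∀ k, G.h1normSq (fs k) ≤ 1 := fun k => Real.sqrt_le_one.mp (hfs1 k)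
    obtain ⟨φ, hφ, hcau⟩ := hce fs hfsK hh1
    obtain ⟨N, hN⟩ := hcau (ε ^ 2 / 8) (by positivity)
    set g := fs (φ N) with hgdef
    have hgH1 := hK1 (hfsK (φ N))
    have hmg : Summable (G.edgeMass g) := aux_summable_mass G hgH1
    have htail := tendsto_tsum_compl_atTop_zero (G.edgeMass g)
    have hev := htail.eventually_lt_const (show (0:ℝ) < ε ^ 2 / 8 by positivity)
    obtain ⟨s₀, hs₀⟩ := hev.exists
    set k₀ := s₀.sup enc + 1 with hk₀
    set m := max N k₀ with hmdef
    have hφm : k₀ ≤ φ m := le_trans (le_max_right N k₀) hφ.le_apply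
    have hs₀sub : ∀ e ∈ s₀, e ∈ Adef (φ m) := fun e he =>
      lt_of_lt_of_le (Nat.lt_succ_of_le (Finset.le_sup he)) hφm
    have hkey : G.l2normSq (fs (φ m) - g) ≤ ε ^ 2 / 8 := hN m (le_max_left N k₀) N (le_refl N)
    set B : Set G.E := {e | e ∉ Adef (φ m)} with hB
    have hBtail : ε < Real.sqrt (G.l2normSqOn B (fs (φ m))) := hfs2 (φ m)
    have hfmH1 := hK1 (hfsK (φ m))
    have hmf : Summable (G.edgeMass (fs (φ m))) := aux_summable_mass G hfmH1
    have hFs : Summable (G.edgeMass (fs (φ m) - g)) :=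
      aux_summable_mass_sub G hfmH1.1 hgH1.1 hmf hmg
    have hl2B : ε ^ 2 < G.l2normSqOn B (fs (φ m)) := by
      have h0 : 0 ≤ G.l2normSqOn B (fs (φ m)) := tsum_nonneg fun e => aux_mass_nonneg G _ _
      exact (Real.lt_sqrt hε.le).mp hBtail
    have hup : G.l2normSqOn B (fs (φ m)) ≤ ε ^ 2 / 2 := by
      have h1 := aux_tail_le_sub G hfmH1.1 hgH1.1 hmf hmg B
      have h2 : (∑' e : B, G.edgeMass (fs (φ m) - g) ↑e) ≤ ε ^ 2 / 8 := by
        have hle : (∑' e : B, G.edgeMass (fs (φ m) - g) ↑e)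
            ≤ ∑' e, G.edgeMass (fs (φ m) - g) e := by
          have h := aux_tsum_mono_set (fun e => aux_mass_nonneg G _ e) hFs (subset_univ B)
          rwa [tsum_univ] at h
        refine hle.trans ?_
        rw [← aux_l2normSq_eq]
        exact hkey
      have h3 : (∑' e : B, G.edgeMass g ↑e) ≤ ε ^ 2 / 8 := by
        have hsub : B ⊆ {x : G.E | x ∉ s₀} := fun e he hmem => he (hs₀sub e hmem)
        have h := aux_tsum_mono_set (fun e => aux_mass_nonneg G g e) hmg hsub
        exact h.trans hs₀.le
      calc G.l2normSqOn B (fs (φ m)) = ∑' e : B, G.edgeMass (fs (φ m)) ↑e := rfl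
        _ ≤ 2 * (∑' e : B, G.edgeMass (fs (φ m) - g) ↑e)
              + 2 * (∑' e : B, G.edgeMass g ↑e) := h1
        _ ≤ 2 * (ε ^ 2 / 8) + 2 * (ε ^ 2 / 8) := by
            have hb1 : (0:ℝ) ≤ 2 := by norm_num
            gcongr
        _ = ε ^ 2 / 2 := by ring
    have hε2 : 0 < ε ^ 2 := by positivity
    linarith
  · -- reverse direction
    intro hyp u hu hbound
    have huH1 : ∀ n, G.MemH1 (u n) := fun n => hK1 (hu n)
    have hmassle : ∀ n e, G.edgeMass (u n) e ≤ 1 := fun n e =>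
      (aux_mass_le_h1 G (huH1 n) e).trans (hbound n)
    have henergyle : ∀ n e, G.edgeEnergy (u n) e ≤ 1 := fun n e =>
      (aux_energy_le_h1 G (huH1 n) e).trans (hbound n)
    have hsum : ∀ n, Summable (G.edgeMass (u n)) := fun n => aux_summable_mass G (huH1 n)
    set pt : G.E × ℕ × ℕ → ℝ :=
      fun j => min (G.len j.1) ((j.2.1 : ℝ) * G.len j.1 / (j.2.2 : ℝ)) with hptdef
    have hpt_mem : ∀ j, pt j ∈ Icc 0 (G.len j.1) := fun j =>
      ⟨le_min (G.len_pos j.1).le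
          (div_nonneg (mul_nonneg (Nat.cast_nonneg _) (G.len_pos j.1).le) (Nat.cast_nonneg _)),
        min_le_left _ _⟩
    set C : G.E × ℕ × ℕ → ℝ := fun j => max 1 (2 * G.len j.1 + 8 / G.len j.1) with hCdef
    set v : ℕ → G.E × ℕ × ℕ → ℝ := fun n j => u n (G.edgeMap j.1 (pt j)) with hvdef
    have hv_mem : ∀ n, v n ∈ Set.pi univ (fun j => Icc (-(C j)) (C j)) := by
      intro n j _
      have hb : v n j ^ 2 ≤ 2 * G.len j.1 + 8 / G.len j.1 :=
        aux_sample_bound G (huH1 n) j.1 (hmassle n j.1) (henergyle n j.1) (hpt_mem j)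
      have habs : |v n j| ≤ C j := by
        rcases le_total |v n j| 1 with h | h
        · exact h.trans (le_max_left _ _)
        · refine le_trans ?_ (le_max_right _ _)
          calc |v n j| ≤ |v n j| * |v n j| := le_mul_of_one_le_left (abs_nonneg _) h
            _ = v n j ^ 2 := by rw [← sq_abs]; ring
            _ ≤ _ := hb
      rw [mem_Icc]
      exact abs_le.mp habs
    have hcompact : IsCompact (Set.pi univ (fun j : G.E × ℕ × ℕ => Icc (-(C j)) (C j))) :=
      isCompact_univ_pi fun j => isCompact_Icc
    obtain ⟨a, -, φ, hφ, hconv⟩ := hcompact.isSeqCompact hv_mem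
    have hptwise : ∀ j, Tendsto (fun n => v (φ n) j) atTop (nhds (a j)) :=
      fun j => (tendsto_pi_nhds.mp hconv) j
    refine ⟨φ, hφ, ?_⟩
    intro ε hε
    have hε12 : (0:ℝ) < ε / 12 := by linarith
    obtain ⟨A, hAfin, hA⟩ := hyp (Real.sqrt (ε / 12)) (Real.sqrt_pos.mpr hε12)
    set s : Finset G.E := hAfin.toFinset with hsdef
    have hseteq : {x : G.E | x ∉ s} = {e : G.E | e ∉ A} := by
      ext x; simp [hsdef, Set.Finite.mem_toFinset]
    set r : ℝ := ε / (3 * ((s.card : ℝ) + 1)) with hr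
    have hrpos : 0 < r := div_pos hε (by positivity)
    set Nf : G.E → ℕ := fun e => ⌊6 * G.len e ^ 2 / r⌋₊ + 1 with hNfdef
    have hNfpos : ∀ e, 0 < Nf e := fun e => Nat.succ_pos _
    have hNfle : ∀ e, 6 * G.len e ^ 2 / (Nf e : ℝ) ≤ r := by
      intro e
      have h1 : 6 * G.len e ^ 2 / r < (Nf e : ℝ) := by
        have h := Nat.lt_floor_add_one (6 * G.len e ^ 2 / r)
        rw [hNfdef]; push_cast; linarith
      have h2 := (div_lt_iff₀ hrpos).mp h1
      rw [div_le_iff₀ (show (0:ℝ) < (Nf e : ℝ) by exact_mod_cast hNfpos e)]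
      nlinarith [h2]
    have hDconv : Tendsto (fun p : ℕ × ℕ => ∑ e ∈ s, 3 * G.len e *
        (∑ i : Fin (Nf e), (v (φ p.1) (e, (i : ℕ), Nf e) - v (φ p.2) (e, (i : ℕ), Nf e)) ^ 2))
        atTop (nhds 0) := by
      rw [← prod_atTop_atTop_eq]
      have hterm : ∀ j : G.E × ℕ × ℕ, Tendsto (fun p : ℕ × ℕ => v (φ p.1) j - v (φ p.2) j)
          ((atTop : Filter ℕ) ×ˢ (atTop : Filter ℕ)) (nhds 0) := by
        intro j
        have h1 := (hptwise j).comp (tendsto_fst (f := (atTop : Filter ℕ)) (g := (atTop : Filter ℕ)))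
        have h2 := (hptwise j).comp (tendsto_snd (f := (atTop : Filter ℕ)) (g := (atTop : Filter ℕ)))
        simpa using h1.sub h2
      have hmain := tendsto_finset_sum s (fun e (_ : e ∈ s) =>
        Tendsto.const_mul (3 * G.len e)
          (tendsto_finset_sum (Finset.univ : Finset (Fin (Nf e))) (fun i _ =>
            (hterm (e, (i : ℕ), Nf e)).pow 2)))
      simpa using hmain
    have hev := hDconv.eventually_lt_const (show (0:ℝ) < ε / 3 by linarith)
    rw [eventually_atTop] at hev
    obtain ⟨p₀, hp₀⟩ := hev
    refine ⟨max p₀.1 p₀.2, ?_⟩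
    intro m hm n hn
    have hDmn : (∑ e ∈ s, 3 * G.len e *
        (∑ i : Fin (Nf e), (v (φ m) (e, (i : ℕ), Nf e) - v (φ n) (e, (i : ℕ), Nf e)) ^ 2))
        < ε / 3 :=
      hp₀ (m, n) ⟨le_trans (le_max_left _ _) hm, le_trans (le_max_right _ _) hn⟩
    set F := u (φ m) - u (φ n) with hF
    have hFm := huH1 (φ m)
    have hFn := huH1 (φ n)
    have hFsum : Summable (G.edgeMass F) :=
      aux_summable_mass_sub G hFm.1 hFn.1 (hsum _) (hsum _)
    have hsplit : G.l2normSq F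
        = (∑ e ∈ s, G.edgeMass F e) + ∑' e : {x : G.E // x ∉ s}, G.edgeMass F ↑e := by
      rw [aux_l2normSq_eq, ← Summable.sum_add_tsum_subtype_compl hFsum s]
    have hpart1 : (∑ e ∈ s, G.edgeMass F e) ≤ (∑ e ∈ s, 3 * G.len e *
        (∑ i : Fin (Nf e), (v (φ m) (e, (i : ℕ), Nf e) - v (φ n) (e, (i : ℕ), Nf e)) ^ 2))
          + ε / 3 := by
      have hedge : ∀ e ∈ s, G.edgeMass F e ≤
          3 * G.len e *
            (∑ i : Fin (Nf e), (v (φ m) (e, (i : ℕ), Nf e) - v (φ n) (e, (i : ℕ), Nf e)) ^ 2)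
            + 6 * G.len e ^ 2 / (Nf e : ℝ) := by
        intro e _
        have h := aux_edge_est G hFm hFn e (henergyle (φ m) e) (henergyle (φ n) e)
          (Nf e) (hNfpos e)
        simp only [Pi.sub_apply] at h ⊢
        exact h
      calc (∑ e ∈ s, G.edgeMass F e)
          ≤ ∑ e ∈ s, (3 * G.len e *
              (∑ i : Fin (Nf e), (v (φ m) (e, (i : ℕ), Nf e) - v (φ n) (e, (i : ℕ), Nf e)) ^ 2)
              + 6 * G.len e ^ 2 / (Nf e : ℝ)) := Finset.sum_le_sum hedge
        _ = (∑ e ∈ s, 3 * G.len e *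
              (∑ i : Fin (Nf e), (v (φ m) (e, (i : ℕ), Nf e) - v (φ n) (e, (i : ℕ), Nf e)) ^ 2))
              + ∑ e ∈ s, 6 * G.len e ^ 2 / (Nf e : ℝ) := Finset.sum_add_distrib
        _ ≤ _ + ε / 3 := by
            refine add_le_add_right ?_ _
            calc ∑ e ∈ s, 6 * G.len e ^ 2 / (Nf e : ℝ) ≤ ∑ _e ∈ s, r :=
                  Finset.sum_le_sum (fun e _ => hNfle e)
              _ = (s.card : ℝ) * r := by rw [Finset.sum_const, nsmul_eq_mul]
              _ ≤ ε / 3 := by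
                  rw [hr, mul_div_assoc']
                  rw [div_le_div_iff₀ (by positivity) (by norm_num : (0:ℝ) < 3)]
                  have hc0 : (0:ℝ) ≤ (s.card : ℝ) := Nat.cast_nonneg _
                  nlinarith [hε, hc0]
    have htl : ∀ p : ℕ, (∑' e : {e : G.E | e ∉ A}, G.edgeMass (u p) ↑e) ≤ ε / 12 := by
      intro p
      have h1 := hA (u p) (hu p) (Real.sqrt_le_one.mpr (hbound p))
      have h0 : 0 ≤ G.l2normSqOn {e : G.E | e ∉ A} (u p) :=
        tsum_nonneg fun e => aux_mass_nonneg G _ _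
      have h2 := pow_le_pow_left₀ (Real.sqrt_nonneg _) h1 2
      rw [Real.sq_sqrt h0, Real.sq_sqrt hε12.le] at h2
      exact h2
    have hpart2 : (∑' e : {x : G.E // x ∉ s}, G.edgeMass F ↑e) ≤ ε / 3 := by
      have hch : (∑' e : {x : G.E // x ∉ s}, G.edgeMass F ↑e)
          = ∑' e : {e : G.E | e ∉ A}, G.edgeMass F ↑e := by
        have h : (∑' e : {x : G.E // x ∉ s}, G.edgeMass F ↑e)
            = ∑' e : ↥{x : G.E | x ∉ s}, G.edgeMass F ↑e := rfl
        rw [h, hseteq]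
      rw [hch]
      have h2 := aux_tail_sub_le G hFm.1 hFn.1 (hsum (φ m)) (hsum (φ n)) {e : G.E | e ∉ A}
      calc (∑' e : {e : G.E | e ∉ A}, G.edgeMass F ↑e)
          ≤ 2 * (∑' e : {e : G.E | e ∉ A}, G.edgeMass (u (φ m)) ↑e)
            + 2 * (∑' e : {e : G.E | e ∉ A}, G.edgeMass (u (φ n)) ↑e) := h2
        _ ≤ 2 * (ε / 12) + 2 * (ε / 12) := by
            have ha := htl (φ m)
            have hb := htl (φ n)
            gcongr
        _ ≤ ε / 3 := by linarith
    calc G.l2normSq F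
        = (∑ e ∈ s, G.edgeMass F e) + ∑' e : {x : G.E // x ∉ s}, G.edgeMass F ↑e := hsplit
      _ ≤ ((∑ e ∈ s, 3 * G.len e *
            (∑ i : Fin (Nf e), (v (φ m) (e, (i : ℕ), Nf e) - v (φ n) (e, (i : ℕ), Nf e)) ^ 2))
            + ε / 3) + ε / 3 := add_le_add hpart1 hpart2
      _ ≤ ε := by linarith [hDmn]
end

section
/- For every α ∈ (0, 1/2], there exists an L^2(G_α)-orthonormal sequence of functions in H^1(G_α) whose H^1(G_α)-norms are uniformly bounded; in particular the Neumann extension H_N on the diagonal comb graph G_α has nonempty essential spectrum. -/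
open MeasureTheory Set Filter
open scoped ENNReal

/-- `G` is the "diagonal comb" metric graph `G_α`: the interval `(0,1]` with a
vertex at each point `n^{-α}` (`n ≥ 1`) carrying a pendant edge ("tooth") of length
`n^{-α}`. Shaft edges are indexed by `Sum.inl n` (the edge from `(n+2)^{-α}` to
`(n+1)^{-α}`), teeth by `Sum.inr n` (the tooth at `(n+1)^{-α}`); `Sum.inl n`
indexes the shaft vertex at `(n+1)^{-α}` and `Sum.inr n` the tip of the `n`-th
tooth. -/
def IsDiagonalComb {X : Type} [MetricSpace X] (G : MetricGraphOn X) (α : ℝ) : Prop :=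
  ∃ (eE : (ℕ ⊕ ℕ) ≃ G.E) (eV : (ℕ ⊕ ℕ) ≃ G.V),
    (∀ n : ℕ, G.len (eE (Sum.inl n)) = ((n : ℝ) + 1) ^ (-α) - ((n : ℝ) + 2) ^ (-α)) ∧
    (∀ n : ℕ, G.len (eE (Sum.inr n)) = ((n : ℝ) + 1) ^ (-α)) ∧
    (∀ n : ℕ, G.endpoint (eE (Sum.inl n)) false = eV (Sum.inl (n + 1)) ∧
      G.endpoint (eE (Sum.inl n)) true = eV (Sum.inl n)) ∧
    (∀ n : ℕ, G.endpoint (eE (Sum.inr n)) false = eV (Sum.inl n) ∧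
      G.endpoint (eE (Sum.inr n)) true = eV (Sum.inr n))


namespace S2Aux

open MetricGraphOn

variable {X : Type} [MetricSpace X] (G : MetricGraphOn X)

/-- Affine interpolation of vertex values along an edge. -/
noncomputable def aff (W : G.V → ℝ) (e : G.E) (t : ℝ) : ℝ :=
  W (G.endpoint e false) + (t / G.len e) * (W (G.endpoint e true) - W (G.endpoint e false))

lemma aff_zero (W : G.V → ℝ) (e : G.E) : aff G W e 0 = W (G.endpoint e false) := by
  simp [aff]

lemma aff_len (W : G.V → ℝ) (e : G.E) : aff G W e (G.len e) = W (G.endpoint e true) := by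
  rw [aff, div_self (G.len_pos e).ne']; ring

lemma boundary_vertex {e : G.E} {t : ℝ} (ht : t ∈ Icc 0 (G.len e))
    (hnotin : t ∉ Ioo 0 (G.len e)) :
    (t = 0 ∧ G.edgeMap e t = G.vertexMap (G.endpoint e false)) ∨
    (t = G.len e ∧ G.edgeMap e t = G.vertexMap (G.endpoint e true)) := by
  rcases ht with ⟨h0, h1⟩
  rcases eq_or_lt_of_le h0 with h | h
  · left; refine ⟨h.symm, ?_⟩; rw [← h]; exact G.edgeMap_zero e
  · rcases eq_or_lt_of_le h1 with h' | h'
    · right; refine ⟨h', ?_⟩; rw [h']; exact G.edgeMap_len e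
    · exact absurd ⟨h, h'⟩ hnotin

lemma aff_coherent (W : G.V → ℝ) {e e' : G.E} {t t' : ℝ}
    (ht : t ∈ Icc 0 (G.len e)) (ht' : t' ∈ Icc 0 (G.len e'))
    (h : G.edgeMap e t = G.edgeMap e' t') : aff G W e t = aff G W e' t' := by
  by_cases hi : t ∈ Ioo 0 (G.len e)
  · by_cases hi' : t' ∈ Ioo 0 (G.len e')
    · rcases eq_or_ne e e' with rfl | hee
      · have : t = t' := G.edgeMap_injOn e ⟨le_of_lt hi.1, hi.2⟩ ⟨le_of_lt hi'.1, hi'.2⟩ h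
        rw [this]
      · exact absurd h (G.interior_disjoint e e' hee t hi t' hi')
    · rcases boundary_vertex G ht' hi' with ⟨_, hv⟩ | ⟨_, hv⟩ <;>
        exact absurd (h.trans hv) (G.interior_not_vertex e t hi _)
  · rcases boundary_vertex G ht hi with ⟨rfl, hv⟩ | ⟨rfl, hv⟩ <;>
    · by_cases hi' : t' ∈ Ioo 0 (G.len e')
      · exact absurd (h.symm.trans hv) (G.interior_not_vertex e' t' hi' _)
      · rcases boundary_vertex G ht' hi' with ⟨rfl, hv'⟩ | ⟨rfl, hv'⟩ <;>
        · have hvv := G.vertexMap_inj (hv.symm.trans (h.trans hv'))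
          first
            | (rw [aff_zero, aff_zero, hvv]) | (rw [aff_zero, aff_len, hvv])
            | (rw [aff_len, aff_zero, hvv]) | (rw [aff_len, aff_len, hvv])

/-- The piecewise-affine extension of vertex values to the metric graph. -/
noncomputable def ext (W : G.V → ℝ) : X → ℝ := fun x =>
  aff G W (G.cover x).choose (G.cover x).choose_spec.choose

lemma ext_eq (W : G.V → ℝ) {e : G.E} {t : ℝ} (ht : t ∈ Icc 0 (G.len e)) :
    ext G W (G.edgeMap e t) = aff G W e t := by
  obtain ⟨hmem, heq⟩ := (G.cover (G.edgeMap e t)).choose_spec.choose_spec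
  exact aff_coherent G W hmem ht heq

lemma ext_vertex (W : G.V → ℝ) {v : G.V} {e : G.E} {b : Bool}
    (hb : G.endpoint e b = v) : ext G W (G.vertexMap v) = W v := by
  cases b
  · rw [← hb, ← G.edgeMap_zero e,
      ext_eq G W ⟨le_refl 0, (G.len_pos e).le⟩, aff_zero]
  · rw [← hb, ← G.edgeMap_len e,
      ext_eq G W ⟨(G.len_pos e).le, le_refl _⟩, aff_len]

lemma aff_add (W W' : G.V → ℝ) (e : G.E) (t : ℝ) :
    aff G (W + W') e t = aff G W e t + aff G W' e t := by
  simp only [aff, Pi.add_apply]; ring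

lemma aff_smul (c : ℝ) (W : G.V → ℝ) (e : G.E) (t : ℝ) :
    aff G (c • W) e t = c * aff G W e t := by
  simp only [aff, Pi.smul_apply, smul_eq_mul]; ring

lemma ext_add (W W' : G.V → ℝ) : ext G (W + W') = ext G W + ext G W' := by
  funext x; simp only [ext, Pi.add_apply]; exact aff_add G W W' _ _

lemma ext_smul (c : ℝ) (W : G.V → ℝ) : ext G (c • W) = c • ext G W := by
  funext x; simp only [ext, Pi.smul_apply, smul_eq_mul]; exact aff_smul G c W _ _

lemma ext_zero : ext G (0 : G.V → ℝ) = 0 := by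
  funext x; simp [ext, aff]

lemma ext_sum {k : ℕ} (W : Fin k → G.V → ℝ) :
    ext G (∑ i, W i) = ∑ i, ext G (W i) := by
  classical
  induction (Finset.univ : Finset (Fin k)) using Finset.induction_on with
  | empty => simpa using ext_zero G
  | insert _ _ h ih => rw [Finset.sum_insert h, Finset.sum_insert h, ext_add, ih]

/-- Slope of the affine extension on an edge. -/
noncomputable def slope (W : G.V → ℝ) (e : G.E) : ℝ :=
  (W (G.endpoint e true) - W (G.endpoint e false)) / G.len e

lemma ext_comp_eventually (W : G.V → ℝ) (e : G.E) {t : ℝ} (ht : t ∈ Ioo 0 (G.len e)) :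
    (ext G W ∘ G.edgeMap e) =ᶠ[nhds t] fun s => aff G W e s :=
  eventually_of_mem (Ioo_mem_nhds ht.1 ht.2)
    (fun s hs => ext_eq G W (Ioo_subset_Icc_self hs))

lemma edgeDeriv_ext (W : G.V → ℝ) (e : G.E) {t : ℝ} (ht : t ∈ Ioo 0 (G.len e)) :
    G.edgeDeriv (ext G W) e t = slope G W e := by
  have haff : (fun s => aff G W e s) = fun s =>
      W (G.endpoint e false) + s * slope G W e := by
    funext s; rw [aff, slope]; ring
  have h1 : HasDerivAt (fun s => aff G W e s) (slope G W e) t := by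
    rw [haff]
    simpa using ((hasDerivAt_id t).mul_const (slope G W e)).const_add
      (W (G.endpoint e false))
  rw [MetricGraphOn.edgeDeriv, (ext_comp_eventually G W e ht).deriv_eq, h1.deriv]

lemma edgeEnergy_ext (W : G.V → ℝ) (e : G.E) :
    G.edgeEnergy (ext G W) e = G.len e * (slope G W e) ^ 2 := by
  rw [MetricGraphOn.edgeEnergy,
    setIntegral_congr_fun (g := fun _ => (slope G W e) ^ 2) measurableSet_Ioo
      (fun t ht => by rw [edgeDeriv_ext G W e ht]),
    setIntegral_const, measureReal_def, Real.volume_Ioo, smul_eq_mul,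
    ENNReal.toReal_ofReal (by linarith [G.len_pos e])]
  ring

lemma edgeMass_ext_eq (W : G.V → ℝ) (e : G.E) :
    G.edgeMass (ext G W) e = ∫ t in Ioo 0 (G.len e), (aff G W e t) ^ 2 := by
  rw [MetricGraphOn.edgeMass]
  exact setIntegral_congr_fun measurableSet_Ioo
    (fun t ht => by rw [ext_eq G W (Ioo_subset_Icc_self ht)])

lemma edgeMass_ext_zero (W : G.V → ℝ) (e : G.E)
    (h0 : W (G.endpoint e false) = 0) (h1 : W (G.endpoint e true) = 0) :
    G.edgeMass (ext G W) e = 0 := by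
  rw [edgeMass_ext_eq]
  have : ∀ t, aff G W e t = 0 := fun t => by simp [aff, h0, h1]
  simp [this]

lemma edgeEnergy_ext_zero (W : G.V → ℝ) (e : G.E)
    (h0 : W (G.endpoint e false) = 0) (h1 : W (G.endpoint e true) = 0) :
    G.edgeEnergy (ext G W) e = 0 := by
  rw [edgeEnergy_ext, slope, h0, h1]; ring

lemma edgeMass_ext_const (W : G.V → ℝ) (e : G.E)
    (h : W (G.endpoint e false) = W (G.endpoint e true)) :
    G.edgeMass (ext G W) e = G.len e * (W (G.endpoint e true)) ^ 2 := by
  rw [edgeMass_ext_eq]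
  have : ∀ t, aff G W e t = W (G.endpoint e true) := fun t => by rw [aff, h]; ring
  rw [setIntegral_congr_fun (g := fun _ => (W (G.endpoint e true)) ^ 2)
      measurableSet_Ioo (fun t _ => by rw [this]),
    setIntegral_const, measureReal_def, Real.volume_Ioo, smul_eq_mul,
    ENNReal.toReal_ofReal (by linarith [G.len_pos e])]
  ring

lemma edgeMass_ext_nonneg (W : G.V → ℝ) (e : G.E) : 0 ≤ G.edgeMass (ext G W) e := by
  rw [MetricGraphOn.edgeMass]
  exact integral_nonneg (fun t => sq_nonneg _)

lemma edgeEnergy_ext_nonneg (W : G.V → ℝ) (e : G.E) : 0 ≤ G.edgeEnergy (ext G W) e := by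
  rw [MetricGraphOn.edgeEnergy]
  exact integral_nonneg (fun t => sq_nonneg _)

lemma edgeMass_ext_smul (c : ℝ) (W : G.V → ℝ) (e : G.E) :
    G.edgeMass (ext G (c • W)) e = c ^ 2 * G.edgeMass (ext G W) e := by
  rw [edgeMass_ext_eq, edgeMass_ext_eq, ← integral_const_mul]
  exact setIntegral_congr_fun measurableSet_Ioo
    (fun t _ => by rw [aff_smul]; ring)

lemma edgeEnergy_ext_smul (c : ℝ) (W : G.V → ℝ) (e : G.E) :
    G.edgeEnergy (ext G (c • W)) e = c ^ 2 * G.edgeEnergy (ext G W) e := by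
  rw [edgeEnergy_ext, edgeEnergy_ext, slope, slope]
  simp only [Pi.smul_apply, smul_eq_mul]
  ring

lemma ftc_ext (W : G.V → ℝ) (e : G.E) {t : ℝ} (ht : t ∈ Icc 0 (G.len e)) :
    ext G W (G.edgeMap e t) = ext G W (G.edgeMap e 0)
      + ∫ s in Ioo 0 t, G.edgeDeriv (ext G W) e s := by
  rw [ext_eq G W ht, ext_eq G W ⟨le_refl 0, (G.len_pos e).le⟩, aff_zero,
    setIntegral_congr_fun (g := fun _ => slope G W e) measurableSet_Ioo
      (fun s hs => edgeDeriv_ext G W e ⟨hs.1, lt_of_lt_of_le hs.2 ht.2⟩),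
    setIntegral_const, measureReal_def, Real.volume_Ioo, smul_eq_mul,
    ENNReal.toReal_ofReal (by linarith [ht.1])]
  rw [aff, slope]
  ring

lemma integrable_deriv_sq (W : G.V → ℝ) (e : G.E) :
    IntegrableOn (fun t => (G.edgeDeriv (ext G W) e t) ^ 2) (Ioo 0 (G.len e)) := by
  have hconst : IntegrableOn (fun _ : ℝ => (slope G W e) ^ 2) (Ioo 0 (G.len e)) volume :=
    integrableOn_const (by rw [Real.volume_Ioo]; exact ENNReal.ofReal_ne_top)
  exact hconst.congr_fun (fun t ht => by rw [edgeDeriv_ext G W e ht]) measurableSet_Ioo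

end S2Aux


namespace S2Aux

open MetricGraphOn

variable {X : Type} [MetricSpace X]

/-- Packaged diagonal-comb data. -/
structure CombData (G : MetricGraphOn X) (α : ℝ) where
  eE : (ℕ ⊕ ℕ) ≃ G.E
  eV : (ℕ ⊕ ℕ) ≃ G.V
  hlen1 : ∀ n : ℕ, G.len (eE (Sum.inl n)) = ((n : ℝ) + 1) ^ (-α) - ((n : ℝ) + 2) ^ (-α)
  hlen2 : ∀ n : ℕ, G.len (eE (Sum.inr n)) = ((n : ℝ) + 1) ^ (-α)
  hepl : ∀ n : ℕ, G.endpoint (eE (Sum.inl n)) false = eV (Sum.inl (n + 1)) ∧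
      G.endpoint (eE (Sum.inl n)) true = eV (Sum.inl n)
  hepr : ∀ n : ℕ, G.endpoint (eE (Sum.inr n)) false = eV (Sum.inl n) ∧
      G.endpoint (eE (Sum.inr n)) true = eV (Sum.inr n)

noncomputable def pf (α : ℝ) (k : ℕ) : ℝ := ((k : ℝ) + 1) ^ (-α)

lemma pf_pos (α : ℝ) (k : ℕ) : 0 < pf α k := Real.rpow_pos_of_pos (by positivity) _

lemma pf_anti {α : ℝ} (hα0 : 0 < α) {j k : ℕ} (h : j ≤ k) : pf α k ≤ pf α j := by
  rw [pf, pf, Real.rpow_neg (by positivity), Real.rpow_neg (by positivity)]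
  refine inv_anti₀ (Real.rpow_pos_of_pos (by positivity) _) ?_
  refine Real.rpow_le_rpow (by positivity) ?_ hα0.le
  have := (Nat.cast_le (α := ℝ)).mpr h
  linarith

lemma pf_small {α : ℝ} (hα0 : 0 < α) {ε : ℝ} (hε : 0 < ε) : ∃ m : ℕ, pf α m < ε := by
  have h1 : Filter.Tendsto (fun k : ℕ => pf α k) atTop (nhds 0) := by
    have h2 := (tendsto_rpow_neg_atTop hα0).comp
      (tendsto_atTop_add_const_right atTop (1 : ℝ) tendsto_natCast_atTop_atTop)
    exact h2
  obtain ⟨m, hm⟩ := Metric.tendsto_atTop.mp h1 ε hε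
  refine ⟨m, ?_⟩
  have := hm m le_rfl
  rwa [Real.dist_eq, sub_zero, abs_of_pos (pf_pos α m)] at this

variable {α : ℝ} {G : MetricGraphOn X}

lemma len_inl (D : CombData G α) (k : ℕ) :
    G.len (D.eE (Sum.inl k)) = pf α k - pf α (k + 1) := by
  have hc : ((k + 1 : ℕ) : ℝ) + 1 = (k : ℝ) + 2 := by push_cast; ring
  rw [D.hlen1 k, pf, pf, hc]

lemma len_inr (D : CombData G α) (k : ℕ) : G.len (D.eE (Sum.inr k)) = pf α k := by
  rw [D.hlen2 k, pf]

/-- Index of an edge. -/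
def idxE (D : CombData G α) (e : G.E) : ℕ := Sum.elim id id (D.eE.symm e)

lemma idx_inl (D : CombData G α) (k : ℕ) : idxE D (D.eE (Sum.inl k)) = k := by
  simp [idxE]

lemma idx_inr (D : CombData G α) (k : ℕ) : idxE D (D.eE (Sum.inr k)) = k := by
  simp [idxE]

lemma no_loop (D : CombData G α) (e : G.E) :
    G.endpoint e false ≠ G.endpoint e true := by
  have he : e = D.eE (D.eE.symm e) := (D.eE.apply_symm_apply e).symm
  rcases hq : D.eE.symm e with k | k
  · rw [he, hq, (D.hepl k).1, (D.hepl k).2]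
    intro h; have := D.eV.injective h; simp at this
  · rw [he, hq, (D.hepr k).1, (D.hepr k).2]
    intro h; have := D.eV.injective h; simp at this

lemma vertex_endpoint (D : CombData G α) (v : G.V) : ∃ e b, G.endpoint e b = v := by
  have hv : v = D.eV (D.eV.symm v) := (D.eV.apply_symm_apply v).symm
  rcases hq : D.eV.symm v with k | k
  · exact ⟨D.eE (Sum.inr k), false, by rw [(D.hepr k).1, hv, hq]⟩
  · exact ⟨D.eE (Sum.inr k), true, by rw [(D.hepr k).2, hv, hq]⟩

lemma endpoint_idx (D : CombData G α) (e : G.E) (b : Bool) :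
    ∃ j, idxE D e ≤ j ∧ j ≤ idxE D e + 1 ∧
      (G.endpoint e b = D.eV (Sum.inl j) ∨ G.endpoint e b = D.eV (Sum.inr j)) := by
  have he : e = D.eE (D.eE.symm e) := (D.eE.apply_symm_apply e).symm
  rcases hq : D.eE.symm e with k | k
  · have hid : idxE D e = k := by rw [idxE, hq]; rfl
    cases b
    · exact ⟨k + 1, by omega, by omega, Or.inl (by rw [he, hq, (D.hepl k).1])⟩
    · exact ⟨k, by omega, by omega, Or.inl (by rw [he, hq, (D.hepl k).2])⟩
  · have hid : idxE D e = k := by rw [idxE, hq]; rfl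
    cases b
    · exact ⟨k, by omega, by omega, Or.inl (by rw [he, hq, (D.hepr k).1])⟩
    · exact ⟨k, by omega, by omega, Or.inr (by rw [he, hq, (D.hepr k).2])⟩

/-- The closed arc of an edge. -/
def arc (G : MetricGraphOn X) (e : G.E) : Set X := G.edgeMap e '' Icc 0 (G.len e)

lemma arc_compact (e : G.E) : IsCompact (arc G e) :=
  isCompact_Icc.image_of_continuousOn (G.edgeMap_cont e)

lemma arc_closed (e : G.E) : IsClosed (arc G e) := (arc_compact e).isClosed

lemma mem_arc (e : G.E) {t : ℝ} (ht : t ∈ Icc 0 (G.len e)) :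
    G.edgeMap e t ∈ arc G e := mem_image_of_mem _ ht

lemma cover_arc (G : MetricGraphOn X) (x : X) :
    ∃ e t, t ∈ Icc 0 (G.len e) ∧ G.edgeMap e t = x := by
  obtain ⟨e, t, ht, h⟩ := G.cover x; exact ⟨e, t, ht, h⟩

/-- The `k`-th shaft vertex. -/
def vert (D : CombData G α) (k : ℕ) : X := G.vertexMap (D.eV (Sum.inl k))

lemma dist_vert_succ (D : CombData G α) (k : ℕ) :
    dist (vert D (k + 1)) (vert D k) ≤ pf α k - pf α (k + 1) := by
  set e := D.eE (Sum.inl k) with hedef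
  have h0 : G.edgeMap e 0 = vert D (k + 1) := by
    rw [G.edgeMap_zero, vert, hedef, (D.hepl k).1]
  have h1 : G.edgeMap e (G.len e) = vert D k := by
    rw [G.edgeMap_len, vert, hedef, (D.hepl k).2]
  have hd := G.dist_le e 0 ⟨le_refl 0, (G.len_pos e).le⟩ (G.len e)
    ⟨(G.len_pos e).le, le_refl _⟩
  rw [h0, h1] at hd
  calc dist (vert D (k + 1)) (vert D k) ≤ |0 - G.len e| := hd
    _ = G.len e := by rw [zero_sub, abs_neg, abs_of_pos (G.len_pos e)]
    _ = pf α k - pf α (k + 1) := len_inl D k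

lemma dist_vert (D : CombData G α) {j k : ℕ} (h : j ≤ k) :
    dist (vert D k) (vert D j) ≤ pf α j - pf α k := by
  induction k, h using Nat.le_induction with
  | base => simp
  | succ k hk ih =>
    calc dist (vert D (k + 1)) (vert D j)
        ≤ dist (vert D (k + 1)) (vert D k) + dist (vert D k) (vert D j) :=
          dist_triangle _ _ _
      _ ≤ (pf α k - pf α (k + 1)) + (pf α j - pf α k) :=
          add_le_add (dist_vert_succ D k) ih
      _ = pf α j - pf α (k + 1) := by ring

lemma dist_vert_le (D : CombData G α) (hα0 : 0 < α) {m i i' : ℕ}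
    (hi : m ≤ i) (hi' : m ≤ i') : dist (vert D i) (vert D i') ≤ pf α m := by
  rcases le_total i i' with h | h
  · rw [dist_comm]
    exact (dist_vert D h).trans (by linarith [pf_pos α i', pf_anti hα0 hi])
  · exact (dist_vert D h).trans (by linarith [pf_pos α i, pf_anti hα0 hi'])

lemma dist_arc_vert (D : CombData G α) (e : G.E) {x : X} (hx : x ∈ arc G e) :
    dist x (vert D (idxE D e)) ≤ pf α (idxE D e) := by
  obtain ⟨t, ht, rfl⟩ := hx
  have he : e = D.eE (D.eE.symm e) := (D.eE.apply_symm_apply e).symm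
  rcases hq : D.eE.symm e with k | k
  · have hid : idxE D e = k := by rw [idxE, hq]; rfl
    have h1 : G.edgeMap e (G.len e) = vert D k := by
      rw [G.edgeMap_len, vert]; rw [he, hq, (D.hepl k).2]
    have hd := G.dist_le e t ht (G.len e) ⟨(G.len_pos e).le, le_refl _⟩
    rw [h1] at hd
    have hlen : G.len e ≤ pf α k := by
      rw [he, hq, len_inl]; linarith [pf_pos α (k + 1)]
    rw [hid]
    calc dist (G.edgeMap e t) (vert D k) ≤ |t - G.len e| := hd
      _ = G.len e - t := by rw [abs_of_nonpos (by linarith [ht.2]), neg_sub]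
      _ ≤ G.len e := by linarith [ht.1]
      _ ≤ pf α k := hlen
  · have hid : idxE D e = k := by rw [idxE, hq]; rfl
    have h1 : G.edgeMap e 0 = vert D k := by
      rw [G.edgeMap_zero, vert]; rw [he, hq, (D.hepr k).1]
    have hd := G.dist_le e t ht 0 ⟨le_refl 0, (G.len_pos e).le⟩
    rw [h1] at hd
    have hlen : G.len e = pf α k := by rw [he, hq, len_inr]
    rw [hid]
    calc dist (G.edgeMap e t) (vert D k) ≤ |t - 0| := hd
      _ = t := by rw [sub_zero, abs_of_nonneg ht.1]
      _ ≤ G.len e := ht.2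
      _ ≤ pf α k := hlen.le

lemma dist_arcs (D : CombData G α) (hα0 : 0 < α) {m : ℕ} {e e' : G.E}
    (hm : m ≤ idxE D e) (hm' : m ≤ idxE D e') {x y : X}
    (hx : x ∈ arc G e) (hy : y ∈ arc G e') : dist x y ≤ 3 * pf α m := by
  have k1 := dist_arc_vert D e hx
  have k2 := dist_arc_vert D e' hy
  have k3 := dist_vert_le D hα0 hm hm'
  have hpe := pf_anti hα0 hm
  have hpe' := pf_anti hα0 hm'
  calc dist x y ≤ dist x (vert D (idxE D e)) +
        dist (vert D (idxE D e)) (vert D (idxE D e')) +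
        dist (vert D (idxE D e')) y := dist_triangle4 _ _ _ _
    _ ≤ pf α (idxE D e) + pf α m + pf α (idxE D e') := by
        refine add_le_add (add_le_add k1 k3) ?_
        rw [dist_comm]; exact k2
    _ ≤ 3 * pf α m := by linarith

/-- Union of arcs of edges of index at least `m`. -/
def Tm (D : CombData G α) (m : ℕ) : Set X := ⋃ e ∈ {e : G.E | m ≤ idxE D e}, arc G e

lemma mem_Tm {D : CombData G α} {m : ℕ} {x : X} :
    x ∈ Tm D m ↔ ∃ e, m ≤ idxE D e ∧ x ∈ arc G e := by
  unfold Tm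
  rw [mem_iUnion₂]
  simp only [mem_setOf_eq, exists_prop]

lemma bad_unique (D : CombData G α) (hα0 : 0 < α) {x y : X}
    (hx : ∀ m, x ∈ closure (Tm D m)) (hy : ∀ m, y ∈ closure (Tm D m)) : x = y := by
  refine eq_of_dist_eq_zero (le_antisymm ?_ dist_nonneg)
  by_contra hlt
  push_neg at hlt
  obtain ⟨m, hm⟩ := pf_small (α := α) hα0 (show (0 : ℝ) < dist x y / 5 by linarith)
  obtain ⟨a, ha, hxa⟩ := Metric.mem_closure_iff.mp (hx m) (pf α m) (pf_pos α m)
  obtain ⟨b, hb, hyb⟩ := Metric.mem_closure_iff.mp (hy m) (pf α m) (pf_pos α m)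
  obtain ⟨e, he, hae⟩ := mem_Tm.mp ha
  obtain ⟨e', he', hbe⟩ := mem_Tm.mp hb
  have hab : dist a b ≤ 3 * pf α m := dist_arcs D hα0 he he' hae hbe
  have h5 : dist x y ≤ 5 * pf α m := by
    have hby : dist b y < pf α m := by rw [dist_comm]; exact hyb
    calc dist x y ≤ dist x a + dist a b + dist b y := dist_triangle4 _ _ _ _
      _ ≤ pf α m + 3 * pf α m + pf α m := add_le_add (add_le_add hxa.le hab) hby.le
      _ = 5 * pf α m := by ring
  linarith

lemma finite_low (D : CombData G α) (m : ℕ) : {e : G.E | idxE D e < m}.Finite := by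
  have hsub : {e : G.E | idxE D e < m} ⊆
      ⇑D.eE '' ((Sum.inl '' Iio m) ∪ (Sum.inr '' Iio m)) := by
    intro e he
    have he' : idxE D e < m := he
    have heq : e = D.eE (D.eE.symm e) := (D.eE.apply_symm_apply e).symm
    rcases hq : D.eE.symm e with k | k
    · have h2 : idxE D e = k := by rw [idxE, hq]; rfl
      have hk : k < m := by omega
      exact ⟨Sum.inl k, Or.inl ⟨k, hk, rfl⟩, by rw [heq, hq]⟩
    · have h2 : idxE D e = k := by rw [idxE, hq]; rfl
      have hk : k < m := by omega
      exact ⟨Sum.inr k, Or.inr ⟨k, hk, rfl⟩, by rw [heq, hq]⟩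
  exact Set.Finite.subset
    ((((finite_Iio m).image _).union ((finite_Iio m).image _)).image _) hsub

lemma shared_vertex {e e' : G.E} {t t' : ℝ} (ht : t ∈ Icc 0 (G.len e))
    (ht' : t' ∈ Icc 0 (G.len e')) (hee : e ≠ e')
    (h : G.edgeMap e t = G.edgeMap e' t') :
    ∃ b b', G.endpoint e b = G.endpoint e' b' := by
  by_cases hi : t ∈ Ioo 0 (G.len e)
  · by_cases hi' : t' ∈ Ioo 0 (G.len e')
    · exact absurd h (G.interior_disjoint e e' hee t hi t' hi')
    · rcases boundary_vertex G ht' hi' with ⟨_, hv⟩ | ⟨_, hv⟩ <;>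
        exact absurd (h.trans hv) (G.interior_not_vertex e t hi _)
  · rcases boundary_vertex G ht hi with ⟨_, hv⟩ | ⟨_, hv⟩ <;>
    · by_cases hi' : t' ∈ Ioo 0 (G.len e')
      · exact absurd (h.symm.trans hv) (G.interior_not_vertex e' t' hi' _)
      · rcases boundary_vertex G ht' hi' with ⟨_, hv'⟩ | ⟨_, hv'⟩ <;>
          exact ⟨_, _, G.vertexMap_inj (hv.symm.trans (h.trans hv'))⟩

lemma exists_m0 (D : CombData G α) (hα0 : 0 < α) :
    ∃ m0 : ℕ, ∀ x : X, (∀ m, x ∈ closure (Tm D m)) →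
      ∀ e : G.E, m0 ≤ idxE D e → x ∉ arc G e := by
  by_cases hbad : ∃ z : X, ∀ m, z ∈ closure (Tm D m)
  · obtain ⟨z, hz⟩ := hbad
    obtain ⟨e₀, t₀, ht₀, hze⟩ := cover_arc G z
    refine ⟨idxE D e₀ + 2, fun x hx e he hxe => ?_⟩
    have hxz : x = z := bad_unique D hα0 hx hz
    subst hxz
    obtain ⟨t, ht, hte⟩ := hxe
    have hne : e ≠ e₀ := by intro hh; rw [hh] at he; omega
    obtain ⟨b, b', hbb⟩ := shared_vertex ht ht₀ hne (hte.trans hze.symm)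
    obtain ⟨j, hj1, hj2, hj3⟩ := endpoint_idx D e b
    obtain ⟨j', hj1', hj2', hj3'⟩ := endpoint_idx D e₀ b'
    rcases hj3 with h3 | h3 <;> rcases hj3' with h3' | h3' <;>
    · rw [h3, h3'] at hbb
      have hinj := D.eV.injective hbb
      simp at hinj <;> omega
  · exact ⟨0, fun x hx => absurd ⟨x, hx⟩ hbad⟩

lemma edgeMap_injOn_Icc (e : G.E)
    (hnl : G.endpoint e false ≠ G.endpoint e true) :
    InjOn (G.edgeMap e) (Icc 0 (G.len e)) := by
  intro s hs t htt h
  by_cases hi : s ∈ Ioo 0 (G.len e)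
  · by_cases hi' : t ∈ Ioo 0 (G.len e)
    · exact G.edgeMap_injOn e ⟨hi.1.le, hi.2⟩ ⟨hi'.1.le, hi'.2⟩ h
    · rcases boundary_vertex G htt hi' with ⟨_, hv⟩ | ⟨_, hv⟩ <;>
        exact absurd (h.trans hv) (G.interior_not_vertex e s hi _)
  · rcases boundary_vertex G hs hi with ⟨h0, hv⟩ | ⟨h0, hv⟩ <;>
    · by_cases hi' : t ∈ Ioo 0 (G.len e)
      · exact absurd (h.symm.trans hv) (G.interior_not_vertex e t hi' _)
      · rcases boundary_vertex G htt hi' with ⟨h0', hv'⟩ | ⟨h0', hv'⟩ <;>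
          first
            | exact h0.trans h0'.symm
            | exact absurd (G.vertexMap_inj (hv.symm.trans (h.trans hv'))) hnl
            | exact absurd (G.vertexMap_inj (hv'.symm.trans (h.symm.trans hv))) hnl

lemma contOn_arc (W : G.V → ℝ) (e : G.E)
    (hnl : G.endpoint e false ≠ G.endpoint e true) :
    ContinuousOn (ext G W) (arc G e) := by
  have hinj := edgeMap_injOn_Icc e hnl
  have hcont : Continuous fun s : Icc (0 : ℝ) (G.len e) => G.edgeMap e s :=
    continuousOn_iff_continuous_restrict.mp (G.edgeMap_cont e)
  let Eqv : Icc (0 : ℝ) (G.len e) ≃ arc G e :=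
    Equiv.ofBijective (fun s => ⟨G.edgeMap e s, mem_image_of_mem _ s.2⟩)
      ⟨fun s t hst => Subtype.ext (hinj s.2 t.2 (by
          simpa using congrArg Subtype.val hst)),
       fun y => by
        obtain ⟨t, ht, hty⟩ := y.2
        exact ⟨⟨t, ht⟩, Subtype.ext hty⟩⟩
  have hEqvCont : Continuous ⇑Eqv := Continuous.subtype_mk hcont _
  haveI : CompactSpace (Icc (0 : ℝ) (G.len e)) := isCompact_iff_compactSpace.mp isCompact_Icc
  let H : Icc (0 : ℝ) (G.len e) ≃ₜ arc G e := hEqvCont.homeoOfEquivCompactToT2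
  have haffc : Continuous fun t : ℝ => aff G W e t := by
    have hre : (fun t : ℝ => aff G W e t) = fun t =>
        W (G.endpoint e false) + (t * (1 / G.len e)) *
          (W (G.endpoint e true) - W (G.endpoint e false)) := by
      funext t; rw [aff]; ring
    rw [hre]
    exact continuous_const.add ((continuous_id.mul continuous_const).mul continuous_const)
  rw [continuousOn_iff_continuous_restrict]
  have hres : restrict (arc G e) (ext G W) =
      (fun t : ℝ => aff G W e t) ∘ Subtype.val ∘ ⇑H.symm := by
    funext y
    have h1 : G.edgeMap e ((H.symm y : Icc (0 : ℝ) (G.len e)) : ℝ) = (y : X) :=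
      congrArg Subtype.val (H.apply_symm_apply y)
    calc restrict (arc G e) (ext G W) y = ext G W (y : X) := rfl
      _ = ext G W (G.edgeMap e ((H.symm y : Icc (0 : ℝ) (G.len e)) : ℝ)) := by rw [h1]
      _ = aff G W e ((H.symm y : Icc (0 : ℝ) (G.len e)) : ℝ) := ext_eq G W (H.symm y).2
  rw [show (arc G e).domRestrict (ext G W) = restrict (arc G e) (ext G W) from rfl, hres]
  exact haffc.comp (continuous_subtype_val.comp H.symm.continuous)

theorem ext_continuous (D : CombData G α) {m0 : ℕ}
    (hm0 : ∀ x : X, (∀ m, x ∈ closure (Tm D m)) →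
      ∀ e : G.E, m0 ≤ idxE D e → x ∉ arc G e)
    (W : G.V → ℝ) (F : Finset G.E)
    (hWF : ∀ e : G.E, e ∉ F → W (G.endpoint e false) = 0 ∧ W (G.endpoint e true) = 0)
    (hFidx : ∀ e ∈ F, m0 ≤ idxE D e) :
    Continuous (ext G W) := by
  classical
  set C : Set X := ⋃ e ∈ (F : Set G.E), arc G e with hC
  have hcl : ∀ x ∈ closure (Cᶜ), ext G W x = 0 := by
    intro x hx
    by_cases hrep : ∃ e, e ∉ F ∧ x ∈ arc G e
    · obtain ⟨e, he, t, ht, rfl⟩ := hrep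
      rw [ext_eq G W ht, aff, (hWF e he).1, (hWF e he).2]; ring
    · exfalso
      have hTm : ∀ m, x ∈ closure (Tm D m) := by
        intro m
        have hsub : Cᶜ ⊆ (⋃ e ∈ {e : G.E | idxE D e < m} \ (F : Set G.E), arc G e)
            ∪ Tm D m := by
          intro y hy
          obtain ⟨e, t, ht, rfl⟩ := cover_arc G y
          have heF : e ∉ F := fun hin => hy (mem_biUnion hin (mem_arc e ht))
          by_cases hidx : idxE D e < m
          · exact Or.inl (mem_biUnion ⟨hidx, heF⟩ (mem_arc e ht))
          · exact Or.inr (mem_Tm.mpr ⟨e, le_of_not_gt hidx, mem_arc e ht⟩)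
        have hcls := closure_mono hsub hx
        rw [closure_union] at hcls
        rcases hcls with h | h
        · have hfin : ({e : G.E | idxE D e < m} \ (F : Set G.E)).Finite :=
            (finite_low D m).diff
          rw [(hfin.isClosed_biUnion (fun e _ => arc_closed e)).closure_eq] at h
          obtain ⟨e, he, hxe⟩ := mem_iUnion₂.mp h
          exact (hrep ⟨e, he.2, hxe⟩).elim
        · exact h
      obtain ⟨e, t, ht, hte⟩ := cover_arc G x
      have hxe : x ∈ arc G e := hte ▸ mem_arc e ht
      have heF : e ∉ F := fun hin => hm0 x hTm e (hFidx e hin) hxe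
      exact hrep ⟨e, heF, hxe⟩
  rw [continuous_iff_continuousAt]
  intro x
  have h1 : ContinuousWithinAt (ext G W) C x := by
    have hn : nhdsWithin x C = ⨆ e ∈ (F : Set G.E), nhdsWithin x (arc G e) := by
      rw [hC]; exact nhdsWithin_biUnion F.finite_toSet _ x
    rw [ContinuousWithinAt, hn, Filter.tendsto_iSup]
    intro e
    rw [Filter.tendsto_iSup]
    intro _
    by_cases hxe : x ∈ arc G e
    · exact contOn_arc W e (no_loop D e) x hxe
    · exact continuousWithinAt_of_notMem_closure (by rwa [(arc_closed e).closure_eq])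
  have h2 : ContinuousWithinAt (ext G W) (closure (Cᶜ)) x := by
    by_cases hx : x ∈ closure (Cᶜ)
    · exact (continuousWithinAt_const (b := 0)).congr (fun y hy => hcl y hy) (hcl x hx)
    · exact continuousWithinAt_of_notMem_closure (by rwa [closure_closure])
  have h3 : ContinuousWithinAt (ext G W) (C ∪ closure (Cᶜ)) x := h1.union h2
  have h4 : (univ : Set X) ⊆ C ∪ closure (Cᶜ) := by
    intro y _
    by_cases hy : y ∈ C
    · exact Set.mem_union_left _ hy
    · exact Set.mem_union_right _ (subset_closure hy)
  have h5 := h3.mono h4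
  rwa [continuousWithinAt_univ] at h5

end S2Aux


namespace S2Aux

open MetricGraphOn

variable {X : Type} [MetricSpace X] {α : ℝ} {G : MetricGraphOn X}

noncomputable def clamp (x : ℝ) : ℝ := max 0 (min 1 x)

lemma clamp_lip (x y : ℝ) : |clamp x - clamp y| ≤ |x - y| := by
  have h1 : |min 1 x - min 1 y| ≤ |x - y| := by
    have h := abs_min_sub_min_le_max 1 x 1 y
    simpa [abs_nonneg] using h
  calc |clamp x - clamp y| ≤ |min 1 x - min 1 y| := by
        have h := abs_max_sub_max_le_abs (min 1 x) (min 1 y) 0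
        simpa [clamp, max_comm] using h
    _ ≤ |x - y| := h1

lemma clamp_of_nonpos {x : ℝ} (hx : x ≤ 0) : clamp x = 0 := by
  rw [clamp, max_eq_left]
  exact le_trans (min_le_right 1 x) hx

lemma clamp_of_one_le {x : ℝ} (hx : 1 ≤ x) : clamp x = 1 := by
  rw [clamp, min_eq_left hx, max_eq_right zero_le_one]

lemma clamp_min_right {a b : ℝ} (hb : 1 ≤ b) : clamp (min a b) = clamp a := by
  rw [clamp, clamp, min_comm a b, ← min_assoc, min_eq_left hb]

lemma clamp_min_left {a b : ℝ} (ha : 1 ≤ a) : clamp (min a b) = clamp b := by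
  rw [clamp, clamp, ← min_assoc, min_eq_left ha]

lemma pf_lt {α : ℝ} (hα0 : 0 < α) {j k : ℕ} (h : j < k) : pf α k < pf α j := by
  rw [pf, pf, Real.rpow_neg (by positivity), Real.rpow_neg (by positivity)]
  refine inv_strictAnti₀ (Real.rpow_pos_of_pos (by positivity) _) ?_
  refine Real.rpow_lt_rpow (by positivity) ?_ hα0
  have := (Nat.cast_lt (α := ℝ)).mpr h
  linarith

lemma rpow_neg_anti (hα0 : 0 < α) {x y : ℝ} (hx : 0 < x) (hxy : x ≤ y) :
    y ^ (-α) ≤ x ^ (-α) := by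
  rw [Real.rpow_neg (le_trans hx.le hxy), Real.rpow_neg hx.le]
  exact inv_anti₀ (Real.rpow_pos_of_pos hx _)
    (Real.rpow_le_rpow hx.le hxy hα0.le)

lemma pf_ratio (hα0 : 0 < α) {A B : ℕ} (h32 : 3 * (A + 1) ≤ 2 * (B + 1)) :
    pf α B ≤ (2 / 3 : ℝ) ^ α * pf α A := by
  have hA1 : (0 : ℝ) < (A : ℝ) + 1 := by positivity
  have h1 : ((3 : ℝ) / 2) * ((A : ℝ) + 1) ≤ (B : ℝ) + 1 := by
    have := (Nat.cast_le (α := ℝ)).mpr h32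
    push_cast at this
    linarith
  have h2 : pf α B ≤ ((3 / 2 : ℝ) * ((A : ℝ) + 1)) ^ (-α) :=
    rpow_neg_anti hα0 (by positivity) h1
  have h3 : ((3 / 2 : ℝ) * ((A : ℝ) + 1)) ^ (-α)
      = (3 / 2 : ℝ) ^ (-α) * ((A : ℝ) + 1) ^ (-α) :=
    Real.mul_rpow (by norm_num) (by positivity)
  have h4 : (3 / 2 : ℝ) ^ (-α) = (2 / 3 : ℝ) ^ α := by
    rw [Real.rpow_neg (by norm_num : (0:ℝ) ≤ 3/2), ← Real.inv_rpow (by norm_num : (0:ℝ) ≤ 3/2)]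
    norm_num
  rw [h3, h4] at h2
  exact h2

lemma kpa_pos (hα0 : 0 < α) : 0 < 1 - (2 / 3 : ℝ) ^ α := by
  have : (2 / 3 : ℝ) ^ α < 1 := Real.rpow_lt_one (by norm_num) (by norm_num) hα0
  linarith

lemma gap2 (hα0 : 0 < α) {A : ℕ} (hA : 1 ≤ A) :
    (1 - (2 / 3 : ℝ) ^ α) * pf α A ≤ pf α A - pf α (2 * A) := by
  have h := pf_ratio (A := A) (B := 2 * A) hα0 (by omega)
  nlinarith [pf_pos α A]

lemma gap48 (hα0 : 0 < α) {A : ℕ} (hA : 1 ≤ A) :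
    (1 - (2 / 3 : ℝ) ^ α) * pf α (4 * A) ≤ pf α (4 * A) - pf α (8 * A) := by
  have h := pf_ratio (A := 4 * A) (B := 8 * A) hα0 (by omega)
  nlinarith [pf_pos α (4 * A)]

lemma dU_pos (hα0 : 0 < α) {A : ℕ} (hA : 1 ≤ A) : 0 < pf α A - pf α (2 * A) := by
  have := gap2 hα0 hA
  nlinarith [kpa_pos hα0, pf_pos α A]

lemma dD_pos (hα0 : 0 < α) {A : ℕ} (hA : 1 ≤ A) : 0 < pf α (4 * A) - pf α (8 * A) := by
  have := gap48 hα0 hA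
  nlinarith [kpa_pos hα0, pf_pos α (4 * A)]

/-- The cut-off profile of the `A`-th block, as a function of position. -/
noncomputable def psi (α : ℝ) (A : ℕ) (x : ℝ) : ℝ :=
  clamp (min ((pf α A - x) / (pf α A - pf α (2 * A)))
    ((x - pf α (8 * A)) / (pf α (4 * A) - pf α (8 * A))))

lemma psi_zero_left (hα0 : 0 < α) {A k : ℕ} (hA : 1 ≤ A) (hk : k ≤ A) :
    psi α A (pf α k) = 0 := by
  rw [psi, clamp_of_nonpos]
  refine le_trans (min_le_left _ _) ?_
  apply div_nonpos_of_nonpos_of_nonneg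
  · linarith [pf_anti hα0 hk]
  · linarith [dU_pos hα0 hA]

lemma psi_zero_right (hα0 : 0 < α) {A k : ℕ} (hA : 1 ≤ A) (hk : 8 * A ≤ k) :
    psi α A (pf α k) = 0 := by
  rw [psi, clamp_of_nonpos]
  refine le_trans (min_le_right _ _) ?_
  apply div_nonpos_of_nonpos_of_nonneg
  · linarith [pf_anti hα0 hk]
  · linarith [dD_pos hα0 hA]

lemma psi_one (hα0 : 0 < α) {A k : ℕ} (hA : 1 ≤ A) (hk1 : 2 * A ≤ k) (hk2 : k ≤ 4 * A) :
    psi α A (pf α k) = 1 := by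
  rw [psi, clamp_of_one_le]
  refine le_min ?_ ?_
  · rw [le_div_iff₀ (dU_pos hα0 hA)]
    have := pf_anti hα0 hk1
    linarith
  · rw [le_div_iff₀ (dD_pos hα0 hA)]
    have := pf_anti hα0 hk2
    linarith

lemma psi_lip_up (hα0 : 0 < α) {A k : ℕ} (hA : 1 ≤ A) (hk1 : A ≤ k) (hk2 : k + 1 ≤ 2 * A) :
    |psi α A (pf α k) - psi α A (pf α (k + 1))|
      ≤ (pf α k - pf α (k + 1)) / (pf α A - pf α (2 * A)) := by
  have hden := dU_pos hα0 hA
  have hb : ∀ j : ℕ, j ≤ 2 * A →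
      (1 : ℝ) ≤ (pf α j - pf α (8 * A)) / (pf α (4 * A) - pf α (8 * A)) := by
    intro j hj
    rw [le_div_iff₀ (dD_pos hα0 hA)]
    have h1 := pf_anti hα0 hj
    have h2 := pf_anti hα0 (show 2 * A ≤ 4 * A by omega)
    linarith
  rw [psi, psi, clamp_min_right (hb k (by omega)), clamp_min_right (hb (k + 1) hk2)]
  refine le_trans (clamp_lip _ _) ?_
  rw [div_sub_div_same]
  have heq : (pf α A - pf α k) - (pf α A - pf α (k + 1)) = -(pf α k - pf α (k + 1)) := by ring
  rw [heq, abs_div, abs_neg, abs_of_nonneg (by linarith [pf_anti hα0 (Nat.le_succ k)]),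
    abs_of_pos hden]

lemma psi_lip_down (hα0 : 0 < α) {A k : ℕ} (hA : 1 ≤ A) (hk1 : 4 * A ≤ k) (hk2 : k + 1 ≤ 8 * A) :
    |psi α A (pf α k) - psi α A (pf α (k + 1))|
      ≤ (pf α k - pf α (k + 1)) / (pf α (4 * A) - pf α (8 * A)) := by
  have hden := dD_pos hα0 hA
  have ha : ∀ j : ℕ, 4 * A ≤ j →
      (1 : ℝ) ≤ (pf α A - pf α j) / (pf α A - pf α (2 * A)) := by
    intro j hj
    rw [le_div_iff₀ (dU_pos hα0 hA)]
    have h1 := pf_anti hα0 hj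
    have h2 := pf_anti hα0 (show 2 * A ≤ 4 * A by omega)
    linarith
  rw [psi, psi, clamp_min_left (ha k hk1), clamp_min_left (ha (k + 1) (by omega))]
  refine le_trans (clamp_lip _ _) ?_
  rw [div_sub_div_same]
  have heq : (pf α k - pf α (8 * A)) - (pf α (k + 1) - pf α (8 * A))
      = pf α k - pf α (k + 1) := by ring
  rw [heq, abs_div, abs_of_nonneg (by linarith [pf_anti hα0 (Nat.le_succ k)]),
    abs_of_pos hden]

lemma tele (a : ℕ) : ∀ b : ℕ, a ≤ b →
    ∑ k ∈ Finset.Ico a b, (pf α k - pf α (k + 1)) = pf α a - pf α b := by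
  intro b hb
  induction b, hb using Nat.le_induction with
  | base => simp
  | succ b hab ih =>
    rw [Finset.sum_Ico_succ_top hab, ih]
    ring

lemma key_ineq (hα0 : 0 < α) (hα : α ≤ 1 / 2) {A : ℕ} (hA : 1 ≤ A) :
    1 ≤ 8 * (A : ℝ) * (pf α (4 * A)) ^ 2 := by
  have hA1 : (1 : ℝ) ≤ (A : ℝ) := by exact_mod_cast hA
  have hx : (0 : ℝ) < (4 * A : ℕ) + 1 := by positivity
  have hsq : (pf α (4 * A)) ^ 2 = (((4 * A : ℕ) : ℝ) + 1) ^ (-(2 * α)) := by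
    rw [pf, sq, ← Real.rpow_add hx]
    ring_nf
  have hbase : (((4 * A : ℕ) : ℝ) + 1) ≤ 8 * (A : ℝ) := by
    push_cast
    linarith
  have h8A : (1 : ℝ) ≤ 8 * (A : ℝ) := by linarith
  have h1 : (((4 * A : ℕ) : ℝ) + 1) ^ (2 * α) ≤ (8 * (A : ℝ)) ^ (2 * α) :=
    Real.rpow_le_rpow (by positivity) hbase (by positivity)
  have h2 : (8 * (A : ℝ)) ^ (2 * α) ≤ (8 * (A : ℝ)) ^ (1 : ℝ) :=
    Real.rpow_le_rpow_of_exponent_le h8A (by linarith)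
  have h3 : (((4 * A : ℕ) : ℝ) + 1) ^ (2 * α) ≤ 8 * (A : ℝ) := by
    rw [Real.rpow_one] at h2
    linarith
  have hpos : (0 : ℝ) < (((4 * A : ℕ) : ℝ) + 1) ^ (2 * α) :=
    Real.rpow_pos_of_pos hx _
  rw [hsq, Real.rpow_neg hx.le]
  have hdiv : (1 : ℝ) ≤ 8 * (A : ℝ) / (((4 * A : ℕ) : ℝ) + 1) ^ (2 * α) :=
    (one_le_div hpos).mpr h3
  rwa [div_eq_mul_inv] at hdiv

end S2Aux


namespace S2Aux

open MetricGraphOn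

variable {X : Type} [MetricSpace X] {α : ℝ} {G : MetricGraphOn X}

def vidx (D : CombData G α) (v : G.V) : ℕ := Sum.elim id id (D.eV.symm v)

/-- The vertex-value profile of the block at scale `A`. -/
noncomputable def Wf (D : CombData G α) (A : ℕ) : G.V → ℝ :=
  fun v => psi α A (pf α (vidx D v))

lemma Wf_inlf (D : CombData G α) (A k : ℕ) :
    Wf D A (G.endpoint (D.eE (Sum.inl k)) false) = psi α A (pf α (k + 1)) := by
  rw [(D.hepl k).1, Wf, vidx]; simp

lemma Wf_inlt (D : CombData G α) (A k : ℕ) :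
    Wf D A (G.endpoint (D.eE (Sum.inl k)) true) = psi α A (pf α k) := by
  rw [(D.hepl k).2, Wf, vidx]; simp

lemma Wf_inrf (D : CombData G α) (A k : ℕ) :
    Wf D A (G.endpoint (D.eE (Sum.inr k)) false) = psi α A (pf α k) := by
  rw [(D.hepr k).1, Wf, vidx]; simp

lemma Wf_inrt (D : CombData G α) (A k : ℕ) :
    Wf D A (G.endpoint (D.eE (Sum.inr k)) true) = psi α A (pf α k) := by
  rw [(D.hepr k).2, Wf, vidx]; simp

/-- The edges of the block at scale `A`. -/
noncomputable def Ffin (D : CombData G α) (A : ℕ) : Finset G.E :=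
  ((Finset.Ico A (8 * A)).disjSum (Finset.Ioo A (8 * A))).map D.eE.toEmbedding

lemma mem_Ffin {D : CombData G α} {A : ℕ} {e : G.E} :
    e ∈ Ffin D A ↔ (∃ k, (A ≤ k ∧ k < 8 * A) ∧ e = D.eE (Sum.inl k)) ∨
      (∃ k, (A < k ∧ k < 8 * A) ∧ e = D.eE (Sum.inr k)) := by
  constructor
  · intro h
    obtain ⟨q, hq, he⟩ := Finset.mem_map.mp h
    simp only [Equiv.coe_toEmbedding] at he
    rcases q with k | k
    · exact Or.inl ⟨k, by simpa using Finset.inl_mem_disjSum.mp hq, he.symm⟩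
    · exact Or.inr ⟨k, by simpa using Finset.inr_mem_disjSum.mp hq, he.symm⟩
  · intro h
    rcases h with ⟨k, hk, rfl⟩ | ⟨k, hk, rfl⟩
    · exact Finset.mem_map.mpr ⟨Sum.inl k,
        Finset.inl_mem_disjSum.mpr (Finset.mem_Ico.mpr hk), rfl⟩
    · exact Finset.mem_map.mpr ⟨Sum.inr k,
        Finset.inr_mem_disjSum.mpr (Finset.mem_Ioo.mpr hk), rfl⟩

lemma Ffin_idx (D : CombData G α) (A : ℕ) : ∀ e ∈ Ffin D A, A ≤ idxE D e := by
  intro e he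
  rcases mem_Ffin.mp he with ⟨k, hk, rfl⟩ | ⟨k, hk, rfl⟩
  · rw [idx_inl]; omega
  · rw [idx_inr]; omega

lemma Wf_zero_off (hα0 : 0 < α) (D : CombData G α) {A : ℕ} (hA : 1 ≤ A) :
    ∀ e : G.E, e ∉ Ffin D A →
      Wf D A (G.endpoint e false) = 0 ∧ Wf D A (G.endpoint e true) = 0 := by
  intro e he
  have heq : e = D.eE (D.eE.symm e) := (D.eE.apply_symm_apply e).symm
  rcases hq : D.eE.symm e with k | k
  · rw [heq, hq] at he ⊢
    have hk : k < A ∨ 8 * A ≤ k := by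
      by_contra hcon; push_neg at hcon
      exact he (mem_Ffin.mpr (Or.inl ⟨k, ⟨by omega, by omega⟩, rfl⟩))
    rw [Wf_inlf, Wf_inlt]
    rcases hk with hk | hk
    · exact ⟨psi_zero_left hα0 hA (by omega), psi_zero_left hα0 hA (by omega)⟩
    · exact ⟨psi_zero_right hα0 hA (by omega), psi_zero_right hα0 hA (by omega)⟩
  · rw [heq, hq] at he ⊢
    have hk : k ≤ A ∨ 8 * A ≤ k := by
      by_contra hcon; push_neg at hcon
      exact he (mem_Ffin.mpr (Or.inr ⟨k, ⟨by omega, by omega⟩, rfl⟩))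
    rw [Wf_inrf, Wf_inrt]
    rcases hk with hk | hk
    · exact ⟨psi_zero_left hα0 hA (by omega), psi_zero_left hα0 hA (by omega)⟩
    · exact ⟨psi_zero_right hα0 hA (by omega), psi_zero_right hα0 hA (by omega)⟩

lemma Wf_vanish_sep (hα0 : 0 < α) (D : CombData G α) {A A' : ℕ} (hA' : 1 ≤ A')
    (hsep : 8 * A ≤ A' ∨ 8 * A' ≤ A) :
    ∀ e ∈ Ffin D A, Wf D A' (G.endpoint e false) = 0 ∧
      Wf D A' (G.endpoint e true) = 0 := by
  intro e he
  rcases mem_Ffin.mp he with ⟨k, hk, rfl⟩ | ⟨k, hk, rfl⟩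
  · rw [Wf_inlf, Wf_inlt]
    rcases hsep with h | h
    · exact ⟨psi_zero_left hα0 hA' (by omega), psi_zero_left hα0 hA' (by omega)⟩
    · exact ⟨psi_zero_right hα0 hA' (by omega), psi_zero_right hα0 hA' (by omega)⟩
  · rw [Wf_inrf, Wf_inrt]
    rcases hsep with h | h
    · exact ⟨psi_zero_left hα0 hA' (by omega), psi_zero_left hα0 hA' (by omega)⟩
    · exact ⟨psi_zero_right hα0 hA' (by omega), psi_zero_right hα0 hA' (by omega)⟩

lemma energy_tooth (D : CombData G α) (A k : ℕ) :
    G.edgeEnergy (ext G (Wf D A)) (D.eE (Sum.inr k)) = 0 := by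
  rw [edgeEnergy_ext, slope, Wf_inrt, Wf_inrf]
  simp

lemma mass_tooth_plateau (hα0 : 0 < α) (D : CombData G α) {A k : ℕ} (hA : 1 ≤ A)
    (hk1 : 2 * A ≤ k) (hk2 : k ≤ 4 * A) :
    G.edgeMass (ext G (Wf D A)) (D.eE (Sum.inr k)) = pf α k := by
  rw [edgeMass_ext_const G _ _ (by rw [Wf_inrf, Wf_inrt]), Wf_inrt, len_inr,
    psi_one hα0 hA hk1 hk2]
  ring

lemma energy_shaft_up (hα0 : 0 < α) (D : CombData G α) {A k : ℕ} (hA : 1 ≤ A)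
    (hk1 : A ≤ k) (hk2 : k + 1 ≤ 4 * A) :
    G.edgeEnergy (ext G (Wf D A)) (D.eE (Sum.inl k)) ≤
      (pf α k - pf α (k + 1)) / (pf α A - pf α (2 * A)) ^ 2 := by
  have hL : 0 < pf α k - pf α (k + 1) := by
    have := pf_lt hα0 (Nat.lt_succ_self k); linarith
  have hdU := dU_pos hα0 hA
  have hΔ : |psi α A (pf α k) - psi α A (pf α (k + 1))| ≤
      (pf α k - pf α (k + 1)) / (pf α A - pf α (2 * A)) := by
    rcases lt_or_ge k (2 * A) with h | h
    · exact psi_lip_up hα0 hA hk1 (by omega)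
    · rw [psi_one hα0 hA h (by omega), psi_one hα0 hA (by omega) (by omega)]
      simp only [sub_self, abs_zero]
      positivity
  rw [edgeEnergy_ext, slope, Wf_inlt, Wf_inlf, len_inl]
  have h1 : (psi α A (pf α k) - psi α A (pf α (k + 1))) ^ 2 ≤
      ((pf α k - pf α (k + 1)) / (pf α A - pf α (2 * A))) ^ 2 := by
    rw [← sq_abs]
    exact pow_le_pow_left₀ (abs_nonneg _) hΔ 2
  have heq : (pf α k - pf α (k + 1)) *
      ((psi α A (pf α k) - psi α A (pf α (k + 1))) / (pf α k - pf α (k + 1))) ^ 2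
      = (psi α A (pf α k) - psi α A (pf α (k + 1))) ^ 2 / (pf α k - pf α (k + 1)) := by
    field_simp
  rw [heq]
  calc (psi α A (pf α k) - psi α A (pf α (k + 1))) ^ 2 / (pf α k - pf α (k + 1))
      ≤ ((pf α k - pf α (k + 1)) / (pf α A - pf α (2 * A))) ^ 2 /
        (pf α k - pf α (k + 1)) := by
        exact (div_le_div_iff_of_pos_right hL).mpr h1
    _ = (pf α k - pf α (k + 1)) / (pf α A - pf α (2 * A)) ^ 2 := by
        field_simp

lemma energy_shaft_down (hα0 : 0 < α) (D : CombData G α) {A k : ℕ} (hA : 1 ≤ A)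
    (hk1 : 4 * A ≤ k) (hk2 : k + 1 ≤ 8 * A) :
    G.edgeEnergy (ext G (Wf D A)) (D.eE (Sum.inl k)) ≤
      (pf α k - pf α (k + 1)) / (pf α (4 * A) - pf α (8 * A)) ^ 2 := by
  have hL : 0 < pf α k - pf α (k + 1) := by
    have := pf_lt hα0 (Nat.lt_succ_self k); linarith
  have hdD := dD_pos hα0 hA
  have hΔ := psi_lip_down hα0 hA hk1 hk2
  rw [edgeEnergy_ext, slope, Wf_inlt, Wf_inlf, len_inl]
  have h1 : (psi α A (pf α k) - psi α A (pf α (k + 1))) ^ 2 ≤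
      ((pf α k - pf α (k + 1)) / (pf α (4 * A) - pf α (8 * A))) ^ 2 := by
    rw [← sq_abs]
    exact pow_le_pow_left₀ (abs_nonneg _) hΔ 2
  have heq : (pf α k - pf α (k + 1)) *
      ((psi α A (pf α k) - psi α A (pf α (k + 1))) / (pf α k - pf α (k + 1))) ^ 2
      = (psi α A (pf α k) - psi α A (pf α (k + 1))) ^ 2 / (pf α k - pf α (k + 1)) := by
    field_simp
  rw [heq]
  calc (psi α A (pf α k) - psi α A (pf α (k + 1))) ^ 2 / (pf α k - pf α (k + 1))
      ≤ ((pf α k - pf α (k + 1)) / (pf α (4 * A) - pf α (8 * A))) ^ 2 /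
        (pf α k - pf α (k + 1)) := by
        exact (div_le_div_iff_of_pos_right hL).mpr h1
    _ = (pf α k - pf α (k + 1)) / (pf α (4 * A) - pf α (8 * A)) ^ 2 := by
        field_simp

end S2Aux


namespace S2Aux

open MetricGraphOn

variable {X : Type} [MetricSpace X] {α : ℝ} {G : MetricGraphOn X}

lemma energy_total (hα0 : 0 < α) (D : CombData G α) (A : ℕ) (hA : 1 ≤ A) :
    ∑ e ∈ Ffin D A, G.edgeEnergy (ext G (Wf D A)) e ≤
      2 / ((1 - (2 / 3 : ℝ) ^ α) ^ 2 * pf α (4 * A)) := by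
  have hκ := kpa_pos hα0
  have hpA := pf_pos α A
  have hp4 := pf_pos α (4 * A)
  have hdU := dU_pos hα0 hA
  have hdD := dD_pos hα0 hA
  rw [Ffin, Finset.sum_map]
  simp only [Equiv.coe_toEmbedding]
  rw [Finset.sum_disjSum]
  have hT : ∑ k ∈ Finset.Ioo A (8 * A),
      G.edgeEnergy (ext G (Wf D A)) (D.eE (Sum.inr k)) = 0 :=
    Finset.sum_eq_zero fun k _ => energy_tooth D A k
  rw [hT, add_zero]
  rw [← Finset.sum_Ico_consecutive
    (fun k => G.edgeEnergy (ext G (Wf D A)) (D.eE (Sum.inl k)))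
    (show A ≤ 4 * A by omega) (show 4 * A ≤ 8 * A by omega)]
  have h1 : ∑ k ∈ Finset.Ico A (4 * A),
      G.edgeEnergy (ext G (Wf D A)) (D.eE (Sum.inl k)) ≤
      (pf α A - pf α (4 * A)) / (pf α A - pf α (2 * A)) ^ 2 := by
    calc ∑ k ∈ Finset.Ico A (4 * A), G.edgeEnergy (ext G (Wf D A)) (D.eE (Sum.inl k))
        ≤ ∑ k ∈ Finset.Ico A (4 * A),
          (pf α k - pf α (k + 1)) / (pf α A - pf α (2 * A)) ^ 2 := by
          refine Finset.sum_le_sum fun k hk => ?_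
          have hk' := Finset.mem_Ico.mp hk
          exact energy_shaft_up hα0 D hA hk'.1 (by omega)
      _ = (pf α A - pf α (4 * A)) / (pf α A - pf α (2 * A)) ^ 2 := by
          rw [← Finset.sum_div, tele A (4 * A) (by omega)]
  have h2 : ∑ k ∈ Finset.Ico (4 * A) (8 * A),
      G.edgeEnergy (ext G (Wf D A)) (D.eE (Sum.inl k)) ≤
      (pf α (4 * A) - pf α (8 * A)) / (pf α (4 * A) - pf α (8 * A)) ^ 2 := by
    calc ∑ k ∈ Finset.Ico (4 * A) (8 * A),
          G.edgeEnergy (ext G (Wf D A)) (D.eE (Sum.inl k))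
        ≤ ∑ k ∈ Finset.Ico (4 * A) (8 * A),
          (pf α k - pf α (k + 1)) / (pf α (4 * A) - pf α (8 * A)) ^ 2 := by
          refine Finset.sum_le_sum fun k hk => ?_
          have hk' := Finset.mem_Ico.mp hk
          exact energy_shaft_down hα0 D hA hk'.1 (by omega)
      _ = (pf α (4 * A) - pf α (8 * A)) / (pf α (4 * A) - pf α (8 * A)) ^ 2 := by
          rw [← Finset.sum_div, tele (4 * A) (8 * A) (by omega)]
  have key1 : (pf α A - pf α (4 * A)) / (pf α A - pf α (2 * A)) ^ 2 ≤
      1 / ((1 - (2 / 3 : ℝ) ^ α) ^ 2 * pf α (4 * A)) := by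
    rw [div_le_div_iff₀ (by positivity) (by positivity)]
    have hg := gap2 hα0 hA
    have hsq : ((1 - (2 / 3 : ℝ) ^ α) * pf α A) ^ 2 ≤ (pf α A - pf α (2 * A)) ^ 2 :=
      pow_le_pow_left₀ (by positivity) hg 2
    have hanti := pf_anti (α := α) hα0 (show A ≤ 4 * A by omega)
    have h6 : (pf α A - pf α (4 * A)) * pf α (4 * A) ≤ pf α A * pf α A := by
      nlinarith [sq_nonneg (pf α A - pf α (4 * A)), sq_nonneg (pf α (4 * A))]
    nlinarith [mul_le_mul_of_nonneg_left h6 (sq_nonneg (1 - (2 / 3 : ℝ) ^ α)), hsq]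
  have key2 : (pf α (4 * A) - pf α (8 * A)) / (pf α (4 * A) - pf α (8 * A)) ^ 2 ≤
      1 / ((1 - (2 / 3 : ℝ) ^ α) ^ 2 * pf α (4 * A)) := by
    rw [div_le_div_iff₀ (by positivity) (by positivity)]
    have hg := gap48 hα0 hA
    have hsq : ((1 - (2 / 3 : ℝ) ^ α) * pf α (4 * A)) ^ 2 ≤
        (pf α (4 * A) - pf α (8 * A)) ^ 2 :=
      pow_le_pow_left₀ (by positivity) hg 2
    have h6 : (pf α (4 * A) - pf α (8 * A)) * pf α (4 * A) ≤ pf α (4 * A) * pf α (4 * A) := by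
      nlinarith [pf_pos α (8 * A), hp4]
    nlinarith [mul_le_mul_of_nonneg_left h6 (sq_nonneg (1 - (2 / 3 : ℝ) ^ α)), hsq]
  have hfin : 1 / ((1 - (2 / 3 : ℝ) ^ α) ^ 2 * pf α (4 * A)) +
      1 / ((1 - (2 / 3 : ℝ) ^ α) ^ 2 * pf α (4 * A)) =
      2 / ((1 - (2 / 3 : ℝ) ^ α) ^ 2 * pf α (4 * A)) := by ring
  linarith

lemma mass_total (hα0 : 0 < α) (D : CombData G α) (A : ℕ) (hA : 1 ≤ A) :
    (A : ℝ) * pf α (4 * A) ≤ ∑ e ∈ Ffin D A, G.edgeMass (ext G (Wf D A)) e := by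
  rw [Ffin, Finset.sum_map]
  simp only [Equiv.coe_toEmbedding]
  rw [Finset.sum_disjSum]
  have h1 : (0 : ℝ) ≤ ∑ k ∈ Finset.Ico A (8 * A),
      G.edgeMass (ext G (Wf D A)) (D.eE (Sum.inl k)) :=
    Finset.sum_nonneg fun k _ => edgeMass_ext_nonneg G _ _
  have h2 : (A : ℝ) * pf α (4 * A) ≤ ∑ k ∈ Finset.Ioo A (8 * A),
      G.edgeMass (ext G (Wf D A)) (D.eE (Sum.inr k)) := by
    have hsub : Finset.Icc (2 * A) (4 * A) ⊆ Finset.Ioo A (8 * A) := by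
      intro k hk
      rw [Finset.mem_Icc] at hk
      rw [Finset.mem_Ioo]
      omega
    have h3 : ∑ k ∈ Finset.Icc (2 * A) (4 * A),
        G.edgeMass (ext G (Wf D A)) (D.eE (Sum.inr k)) ≤
        ∑ k ∈ Finset.Ioo A (8 * A),
        G.edgeMass (ext G (Wf D A)) (D.eE (Sum.inr k)) :=
      Finset.sum_le_sum_of_subset_of_nonneg hsub
        (fun k _ _ => edgeMass_ext_nonneg G _ _)
    have h4 : ∑ k ∈ Finset.Icc (2 * A) (4 * A),
        G.edgeMass (ext G (Wf D A)) (D.eE (Sum.inr k)) =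
        ∑ k ∈ Finset.Icc (2 * A) (4 * A), pf α k :=
      Finset.sum_congr rfl fun k hk => by
        have hk' := Finset.mem_Icc.mp hk
        exact mass_tooth_plateau hα0 D hA hk'.1 hk'.2
    have h5 : (Finset.Icc (2 * A) (4 * A)).card • pf α (4 * A) ≤
        ∑ k ∈ Finset.Icc (2 * A) (4 * A), pf α k :=
      Finset.card_nsmul_le_sum _ _ _ fun k hk =>
        pf_anti hα0 (Finset.mem_Icc.mp hk).2
    have hcard : (Finset.Icc (2 * A) (4 * A)).card = 2 * A + 1 := by
      rw [Nat.card_Icc]; omega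
    rw [hcard, nsmul_eq_mul] at h5
    have hA1 : (1 : ℝ) ≤ (A : ℝ) := by exact_mod_cast hA
    have hc : ((2 * A + 1 : ℕ) : ℝ) = 2 * (A : ℝ) + 1 := by push_cast; ring
    rw [hc] at h5
    have := pf_pos α (4 * A)
    nlinarith
  linarith

lemma mass_pos (hα0 : 0 < α) (D : CombData G α) (A : ℕ) (hA : 1 ≤ A) :
    0 < ∑ e ∈ Ffin D A, G.edgeMass (ext G (Wf D A)) e := by
  refine lt_of_lt_of_le ?_ (mass_total hα0 D A hA)
  have hA1 : (1 : ℝ) ≤ (A : ℝ) := by exact_mod_cast hA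
  have := pf_pos α (4 * A)
  nlinarith

lemma energy_le_mass (hα0 : 0 < α) (hα : α ≤ 1 / 2) (D : CombData G α) (A : ℕ)
    (hA : 1 ≤ A) :
    ∑ e ∈ Ffin D A, G.edgeEnergy (ext G (Wf D A)) e ≤
      16 / (1 - (2 / 3 : ℝ) ^ α) ^ 2 *
        ∑ e ∈ Ffin D A, G.edgeMass (ext G (Wf D A)) e := by
  have hE := energy_total hα0 D A hA
  have hM := mass_total hα0 D A hA
  have hk := key_ineq hα0 hα (A := A) hA
  have hκ := kpa_pos hα0
  have hp := pf_pos α (4 * A)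
  have hA1 : (1 : ℝ) ≤ (A : ℝ) := by exact_mod_cast hA
  have hstep : 2 / ((1 - (2 / 3 : ℝ) ^ α) ^ 2 * pf α (4 * A)) ≤
      16 / (1 - (2 / 3 : ℝ) ^ α) ^ 2 * ((A : ℝ) * pf α (4 * A)) := by
    rw [div_le_iff₀ (by positivity)]
    have hid : 16 / (1 - (2 / 3 : ℝ) ^ α) ^ 2 * ((A : ℝ) * pf α (4 * A)) *
        ((1 - (2 / 3 : ℝ) ^ α) ^ 2 * pf α (4 * A)) =
        16 * ((A : ℝ) * (pf α (4 * A)) ^ 2) := by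
      field_simp
    rw [hid]
    nlinarith
  calc ∑ e ∈ Ffin D A, G.edgeEnergy (ext G (Wf D A)) e
      ≤ 2 / ((1 - (2 / 3 : ℝ) ^ α) ^ 2 * pf α (4 * A)) := hE
    _ ≤ 16 / (1 - (2 / 3 : ℝ) ^ α) ^ 2 * ((A : ℝ) * pf α (4 * A)) := hstep
    _ ≤ 16 / (1 - (2 / 3 : ℝ) ^ α) ^ 2 *
        ∑ e ∈ Ffin D A, G.edgeMass (ext G (Wf D A)) e :=
        mul_le_mul_of_nonneg_left hM (by positivity)

lemma l2normSqOn_eq (f : X → ℝ) (F : Finset G.E)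
    (h0 : ∀ e ∉ F, G.edgeMass f e = 0) :
    G.l2normSqOn Set.univ f = ∑ e ∈ F, G.edgeMass f e := by
  rw [MetricGraphOn.l2normSqOn, tsum_univ (fun e => G.edgeMass f e)]
  exact tsum_eq_sum h0

lemma derivNormSqOn_eq (f : X → ℝ) (F : Finset G.E)
    (h0 : ∀ e ∉ F, G.edgeEnergy f e = 0) :
    G.derivNormSqOn Set.univ f = ∑ e ∈ F, G.edgeEnergy f e := by
  rw [MetricGraphOn.derivNormSqOn, tsum_univ (fun e => G.edgeEnergy f e)]
  exact tsum_eq_sum h0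

lemma l2inner_eq (f g : X → ℝ) (F : Finset G.E)
    (h0 : ∀ e ∉ F, ∀ t ∈ Ioo 0 (G.len e), f (G.edgeMap e t) * g (G.edgeMap e t) = 0) :
    G.l2inner f g = ∑ e ∈ F, ∫ t in Ioo 0 (G.len e),
      f (G.edgeMap e t) * g (G.edgeMap e t) := by
  rw [MetricGraphOn.l2inner]
  refine tsum_eq_sum fun e he => ?_
  rw [setIntegral_congr_fun (g := fun _ => (0 : ℝ)) measurableSet_Ioo
    (fun t ht => h0 e he t ht)]
  simp

lemma ext_edge_zero (W : G.V → ℝ) (e : G.E)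
    (h0 : W (G.endpoint e false) = 0) (h1 : W (G.endpoint e true) = 0)
    {t : ℝ} (ht : t ∈ Icc 0 (G.len e)) : ext G W (G.edgeMap e t) = 0 := by
  rw [ext_eq G W ht, aff, h0, h1]; ring

lemma memH1_ext (D : CombData G α) {m0 : ℕ}
    (hm0 : ∀ x : X, (∀ m, x ∈ closure (Tm D m)) →
      ∀ e : G.E, m0 ≤ idxE D e → x ∉ arc G e)
    (W : G.V → ℝ) (F : Finset G.E)
    (hWF : ∀ e : G.E, e ∉ F → W (G.endpoint e false) = 0 ∧ W (G.endpoint e true) = 0)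
    (hFidx : ∀ e ∈ F, m0 ≤ idxE D e) :
    G.MemH1 (ext G W) := by
  have hcont := ext_continuous D hm0 W F hWF hFidx
  refine ⟨hcont, hcont.continuousOn, fun e _ => integrable_deriv_sq G W e,
    fun e _ t ht => ftc_ext G W e ht, ?_⟩
  have hsummand : ∀ e : G.E, e ∉ F →
      G.edgeMass (ext G W) e + G.edgeEnergy (ext G W) e = 0 := by
    intro e he
    rw [edgeMass_ext_zero G W e (hWF e he).1 (hWF e he).2,
      edgeEnergy_ext_zero G W e (hWF e he).1 (hWF e he).2]
    ring
  have hsum : Summable fun e : G.E =>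
      G.edgeMass (ext G W) e + G.edgeEnergy (ext G W) e :=
    summable_of_ne_finset_zero hsummand
  exact ((Equiv.Set.univ G.E).summable_iff).mpr hsum

end S2Aux


namespace S2Aux

open MetricGraphOn

variable {X : Type} [MetricSpace X] {α : ℝ} {G : MetricGraphOn X}

lemma edgeMass_ext_congr (W W' : G.V → ℝ) (e : G.E)
    (h0 : W (G.endpoint e false) = W' (G.endpoint e false))
    (h1 : W (G.endpoint e true) = W' (G.endpoint e true)) :
    G.edgeMass (ext G W) e = G.edgeMass (ext G W') e := by
  rw [edgeMass_ext_eq, edgeMass_ext_eq]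
  exact setIntegral_congr_fun measurableSet_Ioo
    (fun t _ => by rw [aff, aff, h0, h1])

lemma edgeEnergy_ext_congr (W W' : G.V → ℝ) (e : G.E)
    (h0 : W (G.endpoint e false) = W' (G.endpoint e false))
    (h1 : W (G.endpoint e true) = W' (G.endpoint e true)) :
    G.edgeEnergy (ext G W) e = G.edgeEnergy (ext G W') e := by
  rw [edgeEnergy_ext, edgeEnergy_ext, slope, slope, h0, h1]

lemma l2inner_self (f : X → ℝ) (F : Finset G.E)
    (h0 : ∀ e ∉ F, ∀ t ∈ Icc 0 (G.len e), f (G.edgeMap e t) = 0) :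
    G.l2inner f f = ∑ e ∈ F, G.edgeMass f e := by
  rw [l2inner_eq f f F
    (fun e he t ht => by rw [h0 e he t (Ioo_subset_Icc_self ht)]; ring)]
  refine Finset.sum_congr rfl fun e _ => ?_
  rw [MetricGraphOn.edgeMass]
  exact setIntegral_congr_fun measurableSet_Ioo (fun t _ => by ring)

lemma vidx_inl (D : CombData G α) (k : ℕ) : vidx D (D.eV (Sum.inl k)) = k := by
  simp [vidx]

lemma Ffin_idx_ub (D : CombData G α) (A : ℕ) : ∀ e ∈ Ffin D A, idxE D e < 8 * A := by
  intro e he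
  rcases mem_Ffin.mp he with ⟨k, hk, rfl⟩ | ⟨k, hk, rfl⟩
  · rw [idx_inl]; omega
  · rw [idx_inr]; omega

end S2Aux

open MetricGraphOn in
/-- For `α ∈ (0, 1/2]` there is an `L²(G_α)`-orthonormal sequence
in `H¹(G_α)` with uniformly bounded `H¹` norms; in particular the Neumann extension
on the diagonal comb `G_α` has nonempty essential spectrum (its spectrum is not
purely discrete). -/
theorem statement2 (α : ℝ) (hα0 : 0 < α) (hα : α ≤ 1 / 2)
    (X : Type) [MetricSpace X] (G : MetricGraphOn X) (hG : IsDiagonalComb G α) :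
    (∃ u : ℕ → X → ℝ, (∀ n, G.MemH1 (u n)) ∧
      (∀ n, G.l2inner (u n) (u n) = 1) ∧
      (∀ m n, m ≠ n → G.l2inner (u m) (u n) = 0) ∧
      ∃ C : ℝ, ∀ n, G.h1normSq (u n) ≤ C) ∧
    ¬ G.HasPurelyDiscreteSpectrumOn {f | G.MemH1 f} := by
  classical
  obtain ⟨eE, eV, hl1, hl2, he1, he2⟩ := hG
  set D : S2Aux.CombData G α := ⟨eE, eV, hl1, hl2, he1, he2⟩ with hDdef
  obtain ⟨m0, hm0⟩ := S2Aux.exists_m0 D hα0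
  set A : ℕ → ℕ := fun n => (m0 + 1) * 8 ^ (n + 1) with hAdef
  have h8 : ∀ n : ℕ, 1 ≤ 8 ^ (n + 1) := fun n => Nat.one_le_pow _ _ (by norm_num)
  have hA1 : ∀ n, 1 ≤ A n := by
    intro n
    have := h8 n
    have h0 : 0 < (m0 + 1) * 8 ^ (n + 1) :=
      Nat.mul_pos (Nat.succ_pos m0) (pow_pos (by norm_num) (n + 1))
    simp only [hAdef]
    omega
  have hAm0 : ∀ n, m0 ≤ A n := by
    intro n
    have h := h8 n
    have : (m0 + 1) * 1 ≤ (m0 + 1) * 8 ^ (n + 1) := Nat.mul_le_mul_left _ h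
    simp only [hAdef]
    omega
  have hsep : ∀ {m n : ℕ}, m < n → 8 * A m ≤ A n := by
    intro m n h
    have h1 : 8 * A m = (m0 + 1) * 8 ^ (m + 2) := by
      simp only [hAdef]; ring
    have h2 : (8 : ℕ) ^ (m + 2) ≤ 8 ^ (n + 1) :=
      Nat.pow_le_pow_right (by norm_num) (by omega)
    rw [h1]
    simp only [hAdef]
    exact Nat.mul_le_mul_left _ h2
  set F : ℕ → Finset G.E := fun n => S2Aux.Ffin D (A n) with hFdef
  set W0 : ℕ → G.V → ℝ := fun n => S2Aux.Wf D (A n) with hW0def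
  set M : ℕ → ℝ := fun n => ∑ e ∈ F n, G.edgeMass (S2Aux.ext G (W0 n)) e with hMdef
  have hMpos : ∀ n, 0 < M n := fun n => S2Aux.mass_pos hα0 D (A n) (hA1 n)
  set c : ℕ → ℝ := fun n => (Real.sqrt (M n))⁻¹ with hcdef
  have hcpos : ∀ n, 0 < c n := fun n => by
    simp only [hcdef]
    exact inv_pos.mpr (Real.sqrt_pos.mpr (hMpos n))
  have hc2 : ∀ n, (c n) ^ 2 * M n = 1 := by
    intro n
    simp only [hcdef]
    rw [inv_pow, Real.sq_sqrt (hMpos n).le]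
    exact inv_mul_cancel₀ (hMpos n).ne'
  set WW : ℕ → G.V → ℝ := fun n => c n • W0 n with hWWdef
  set uu : ℕ → X → ℝ := fun n => S2Aux.ext G (WW n) with huudef
  have hWFn : ∀ n, ∀ e : G.E, e ∉ F n →
      WW n (G.endpoint e false) = 0 ∧ WW n (G.endpoint e true) = 0 := by
    intro n e he
    have h := S2Aux.Wf_zero_off hα0 D (hA1 n) e he
    constructor <;>
      simp only [hWWdef, Pi.smul_apply, smul_eq_mul, hW0def, h.1, h.2, mul_zero]
  have hFidx : ∀ n, ∀ e ∈ F n, m0 ≤ S2Aux.idxE D e := by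
    intro n e he
    exact le_trans (hAm0 n) (S2Aux.Ffin_idx D (A n) e he)
  have hmemH1 : ∀ n, G.MemH1 (uu n) := fun n =>
    S2Aux.memH1_ext D hm0 (WW n) (F n) (hWFn n) (hFidx n)
  have hmassu : ∀ n, ∀ e : G.E,
      G.edgeMass (uu n) e = (c n) ^ 2 * G.edgeMass (S2Aux.ext G (W0 n)) e := by
    intro n e
    simp only [huudef, hWWdef]
    exact S2Aux.edgeMass_ext_smul G (c n) (W0 n) e
  have henergyu : ∀ n, ∀ e : G.E,
      G.edgeEnergy (uu n) e = (c n) ^ 2 * G.edgeEnergy (S2Aux.ext G (W0 n)) e := by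
    intro n e
    simp only [huudef, hWWdef]
    exact S2Aux.edgeEnergy_ext_smul G (c n) (W0 n) e
  have huzero : ∀ n, ∀ e ∉ F n, ∀ t ∈ Icc 0 (G.len e), uu n (G.edgeMap e t) = 0 := by
    intro n e he t ht
    exact S2Aux.ext_edge_zero (WW n) e (hWFn n e he).1 (hWFn n e he).2 ht
  have hmass_off : ∀ n, ∀ e ∉ F n, G.edgeMass (uu n) e = 0 := by
    intro n e he
    exact S2Aux.edgeMass_ext_zero G (WW n) e (hWFn n e he).1 (hWFn n e he).2
  have hen_off : ∀ n, ∀ e ∉ F n, G.edgeEnergy (uu n) e = 0 := by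
    intro n e he
    exact S2Aux.edgeEnergy_ext_zero G (WW n) e (hWFn n e he).1 (hWFn n e he).2
  have hsumM : ∀ n, ∑ e ∈ F n, G.edgeMass (uu n) e = 1 := by
    intro n
    have h1 : ∑ e ∈ F n, G.edgeMass (uu n) e =
        (c n) ^ 2 * ∑ e ∈ F n, G.edgeMass (S2Aux.ext G (W0 n)) e := by
      rw [Finset.mul_sum]
      exact Finset.sum_congr rfl fun e _ => hmassu n e
    rw [h1]
    exact hc2 n
  have hl2self : ∀ n, G.l2inner (uu n) (uu n) = 1 := by
    intro n
    rw [S2Aux.l2inner_self (uu n) (F n) (huzero n)]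
    exact hsumM n
  have hdisjF : ∀ {m n : ℕ}, m ≠ n → ∀ e ∈ F m, e ∉ F n := by
    intro m n hmn e hem hen
    have h1 := S2Aux.Ffin_idx D (A m) e hem
    have h2 := S2Aux.Ffin_idx_ub D (A m) e hem
    have h3 := S2Aux.Ffin_idx D (A n) e hen
    have h4 := S2Aux.Ffin_idx_ub D (A n) e hen
    rcases Nat.lt_or_ge m n with h | h
    · have := hsep h; omega
    · have := hsep (show n < m by omega); omega
  have horth : ∀ m n, m ≠ n → G.l2inner (uu m) (uu n) = 0 := by
    intro m n hmn
    have h0 : ∀ e : G.E, e ∉ (∅ : Finset G.E) → ∀ t ∈ Ioo 0 (G.len e),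
        uu m (G.edgeMap e t) * uu n (G.edgeMap e t) = 0 := by
      intro e _ t ht
      by_cases hem : e ∈ F m
      · rw [huzero n e (hdisjF hmn e hem) t (Ioo_subset_Icc_self ht)]; ring
      · rw [huzero m e hem t (Ioo_subset_Icc_self ht)]; ring
    rw [S2Aux.l2inner_eq (uu m) (uu n) ∅ h0, Finset.sum_empty]
  have hl2norm : ∀ n, G.l2normSq (uu n) = 1 := by
    intro n
    rw [MetricGraphOn.l2normSq, S2Aux.l2normSqOn_eq (uu n) (F n) (hmass_off n)]
    exact hsumM n
  have hsumE : ∀ n, ∑ e ∈ F n, G.edgeEnergy (uu n) e ≤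
      16 / (1 - (2 / 3 : ℝ) ^ α) ^ 2 := by
    intro n
    have h1 : ∑ e ∈ F n, G.edgeEnergy (uu n) e =
        (c n) ^ 2 * ∑ e ∈ F n, G.edgeEnergy (S2Aux.ext G (W0 n)) e := by
      rw [Finset.mul_sum]
      exact Finset.sum_congr rfl fun e _ => henergyu n e
    rw [h1]
    have h2 := S2Aux.energy_le_mass hα0 hα D (A n) (hA1 n)
    have h3 : (c n) ^ 2 * ∑ e ∈ F n, G.edgeEnergy (S2Aux.ext G (W0 n)) e ≤
        (c n) ^ 2 * (16 / (1 - (2 / 3 : ℝ) ^ α) ^ 2 * M n) := by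
      refine mul_le_mul_of_nonneg_left ?_ (sq_nonneg _)
      exact h2
    have h4 : (c n) ^ 2 * (16 / (1 - (2 / 3 : ℝ) ^ α) ^ 2 * M n) =
        16 / (1 - (2 / 3 : ℝ) ^ α) ^ 2 * ((c n) ^ 2 * M n) := by ring
    rw [h4, hc2 n, mul_one] at h3
    exact h3
  have hdnorm : ∀ n, G.derivNormSq (uu n) ≤ 16 / (1 - (2 / 3 : ℝ) ^ α) ^ 2 := by
    intro n
    rw [MetricGraphOn.derivNormSq, S2Aux.derivNormSqOn_eq (uu n) (F n) (hen_off n)]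
    exact hsumE n
  have hh1 : ∀ n, G.h1normSq (uu n) ≤ 1 + 16 / (1 - (2 / 3 : ℝ) ^ α) ^ 2 := by
    intro n
    rw [MetricGraphOn.h1normSq, hl2norm n]
    linarith [hdnorm n]
  have hkey : ∀ k : ℕ, G.eigenOn Set.univ {f | G.MemH1 f} k ≤
      max (16 / (1 - (2 / 3 : ℝ) ^ α) ^ 2) 0 := by
    intro k
    have hmemS : (16 / (1 - (2 / 3 : ℝ) ^ α) ^ 2) ∈
        {μ : ℝ | ∃ φ : Fin k → X → ℝ, (∀ i, φ i ∈ {f | G.MemH1 f}) ∧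
          LinearIndependent ℝ (fun i => (G.subgraphSet Set.univ).restrict (φ i)) ∧
          ∀ cc : Fin k → ℝ,
            G.derivNormSqOn Set.univ (∑ i, cc i • φ i) ≤
              (16 / (1 - (2 / 3 : ℝ) ^ α) ^ 2) *
                G.l2normSqOn Set.univ (∑ i, cc i • φ i)} := by
      refine ⟨fun i => uu (i : ℕ), fun i => hmemH1 (i : ℕ), ?_, ?_⟩
      · -- linear independence
        rw [Fintype.linearIndependent_iff]
        intro g hg i
        set kk : ℕ := 2 * A (i : ℕ) + 1 with hkkdef
        have hb : G.endpoint (D.eE (Sum.inr kk)) false = D.eV (Sum.inl kk) :=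
          (D.hepr kk).1
        have hxmem : G.vertexMap (D.eV (Sum.inl kk)) ∈ G.subgraphSet Set.univ := by
          rw [MetricGraphOn.subgraphSet]
          refine mem_biUnion (mem_univ (D.eE (Sum.inr kk))) ?_
          exact ⟨0, ⟨le_refl 0, (G.len_pos _).le⟩, by rw [G.edgeMap_zero, hb]⟩
        have hval : ∀ j : ℕ, uu j (G.vertexMap (D.eV (Sum.inl kk))) =
            c j * S2Aux.psi α (A j) (S2Aux.pf α kk) := by
          intro j
          have h1 : uu j (G.vertexMap (D.eV (Sum.inl kk))) = WW j (D.eV (Sum.inl kk)) :=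
            S2Aux.ext_vertex G (WW j) hb
          rw [h1]
          simp only [hWWdef, Pi.smul_apply, smul_eq_mul, hW0def]
          congr 1
          show S2Aux.Wf D (A j) (D.eV (Sum.inl kk)) = S2Aux.psi α (A j) (S2Aux.pf α kk)
          rw [S2Aux.Wf, S2Aux.vidx_inl]
        have hzero : ∀ j : Fin k, j ≠ i →
            uu (j : ℕ) (G.vertexMap (D.eV (Sum.inl kk))) = 0 := by
          intro j hj
          rw [hval (j : ℕ)]
          rcases Nat.lt_or_ge (j : ℕ) (i : ℕ) with h | h
          · have hs := hsep h
            rw [S2Aux.psi_zero_right hα0 (hA1 (j : ℕ)) (by omega)]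
            ring
          · have hij : (i : ℕ) < (j : ℕ) :=
              lt_of_le_of_ne h (fun hh => hj (Fin.ext hh.symm))
            have hs := hsep hij
            have hAi := hA1 (i : ℕ)
            rw [S2Aux.psi_zero_left hα0 (hA1 (j : ℕ)) (by omega)]
            ring
        have hone : uu (i : ℕ) (G.vertexMap (D.eV (Sum.inl kk))) = c (i : ℕ) := by
          have hAi := hA1 (i : ℕ)
          rw [hval (i : ℕ),
            S2Aux.psi_one hα0 (hA1 (i : ℕ)) (by omega) (by omega), mul_one]
        have heval := congrFun hg ⟨_, hxmem⟩
        simp only [Finset.sum_apply, Pi.smul_apply, smul_eq_mul,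
          Set.restrict, Set.domRestrict_apply, Pi.zero_apply] at heval
        rw [Finset.sum_eq_single i (fun j _ hj => by rw [hzero j hj]; ring)
          (fun h => absurd (Finset.mem_univ i) h)] at heval
        rw [hone] at heval
        rcases mul_eq_zero.mp heval with h | h
        · exact h
        · exact absurd h (hcpos (i : ℕ)).ne'
      · -- form bound
        intro cc
        set Wc : G.V → ℝ := ∑ j : Fin k, cc j • WW (j : ℕ) with hWcdef
        have hcombo : (∑ j : Fin k, cc j • uu (j : ℕ)) = S2Aux.ext G Wc := by
          rw [hWcdef, S2Aux.ext_sum G (fun j : Fin k => cc j • WW (j : ℕ))]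
          exact Finset.sum_congr rfl fun j _ =>
            (S2Aux.ext_smul G (cc j) (WW (j : ℕ))).symm
        have hWcongr : ∀ (j : Fin k), ∀ e ∈ F (j : ℕ), ∀ b,
            Wc (G.endpoint e b) = (cc j • WW (j : ℕ)) (G.endpoint e b) := by
          intro j e he b
          rw [hWcdef, Finset.sum_apply]
          refine Finset.sum_eq_single j (fun j' _ hj' => ?_)
            (fun h => absurd (Finset.mem_univ j) h)
          have hne : (j' : ℕ) ≠ (j : ℕ) := fun h => hj' (Fin.ext h)
          have hsep' : 8 * A (j : ℕ) ≤ A (j' : ℕ) ∨ 8 * A (j' : ℕ) ≤ A (j : ℕ) := by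
            rcases Nat.lt_or_ge (j : ℕ) (j' : ℕ) with h | h
            · exact Or.inl (hsep h)
            · exact Or.inr (hsep (lt_of_le_of_ne h (fun hh => hne hh)))
          have hv := S2Aux.Wf_vanish_sep hα0 D (hA1 (j' : ℕ)) hsep' e he
          cases b
          · simp only [Pi.smul_apply, smul_eq_mul, hWWdef, hW0def, hv.1]
            ring
          · simp only [Pi.smul_apply, smul_eq_mul, hWWdef, hW0def, hv.2]
            ring
        have hmassWc : ∀ (j : Fin k), ∀ e ∈ F (j : ℕ),
            G.edgeMass (S2Aux.ext G Wc) e = (cc j) ^ 2 * G.edgeMass (uu (j : ℕ)) e := by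
          intro j e he
          rw [S2Aux.edgeMass_ext_congr Wc (cc j • WW (j : ℕ)) e
            (hWcongr j e he false) (hWcongr j e he true)]
          exact S2Aux.edgeMass_ext_smul G (cc j) (WW (j : ℕ)) e
        have henWc : ∀ (j : Fin k), ∀ e ∈ F (j : ℕ),
            G.edgeEnergy (S2Aux.ext G Wc) e = (cc j) ^ 2 * G.edgeEnergy (uu (j : ℕ)) e := by
          intro j e he
          rw [S2Aux.edgeEnergy_ext_congr Wc (cc j • WW (j : ℕ)) e
            (hWcongr j e he false) (hWcongr j e he true)]
          exact S2Aux.edgeEnergy_ext_smul G (cc j) (WW (j : ℕ)) e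
        have hWc_off : ∀ e : G.E, (∀ j : Fin k, e ∉ F (j : ℕ)) →
            Wc (G.endpoint e false) = 0 ∧ Wc (G.endpoint e true) = 0 := by
          intro e he
          constructor <;>
          · rw [hWcdef, Finset.sum_apply]
            refine Finset.sum_eq_zero fun j _ => ?_
            have hz := hWFn (j : ℕ) e (he j)
            simp only [Pi.smul_apply, smul_eq_mul, hz.1, hz.2, mul_zero]
        set FF : Finset G.E := Finset.univ.biUnion (fun j : Fin k => F (j : ℕ)) with hFFdef
        have hFFdisj : ∀ j1 ∈ (Finset.univ : Finset (Fin k)), ∀ j2 ∈ Finset.univ,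
            j1 ≠ j2 → Disjoint (F (j1 : ℕ)) (F (j2 : ℕ)) := by
          intro j1 _ j2 _ hne
          rw [Finset.disjoint_left]
          intro e he1 he2
          exact hdisjF (fun h => hne (Fin.ext h)) e he1 he2
        have hoffFF : ∀ e ∉ FF, ∀ j : Fin k, e ∉ F (j : ℕ) := by
          intro e he j hej
          exact he (Finset.mem_biUnion.mpr ⟨j, Finset.mem_univ j, hej⟩)
        have hmass_offFF : ∀ e ∉ FF, G.edgeMass (S2Aux.ext G Wc) e = 0 := by
          intro e he
          exact S2Aux.edgeMass_ext_zero G Wc e (hWc_off e (hoffFF e he)).1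
            (hWc_off e (hoffFF e he)).2
        have hen_offFF : ∀ e ∉ FF, G.edgeEnergy (S2Aux.ext G Wc) e = 0 := by
          intro e he
          exact S2Aux.edgeEnergy_ext_zero G Wc e (hWc_off e (hoffFF e he)).1
            (hWc_off e (hoffFF e he)).2
        have hl2c : G.l2normSqOn Set.univ (∑ j : Fin k, cc j • uu (j : ℕ)) =
            ∑ j : Fin k, (cc j) ^ 2 := by
          rw [hcombo, S2Aux.l2normSqOn_eq (S2Aux.ext G Wc) FF hmass_offFF, hFFdef,
            Finset.sum_biUnion hFFdisj]
          refine Finset.sum_congr rfl fun j _ => ?_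
          rw [Finset.sum_congr rfl (fun e he => hmassWc j e he), ← Finset.mul_sum,
            hsumM (j : ℕ), mul_one]
        have hdc : G.derivNormSqOn Set.univ (∑ j : Fin k, cc j • uu (j : ℕ)) ≤
            16 / (1 - (2 / 3 : ℝ) ^ α) ^ 2 * ∑ j : Fin k, (cc j) ^ 2 := by
          rw [hcombo, S2Aux.derivNormSqOn_eq (S2Aux.ext G Wc) FF hen_offFF, hFFdef,
            Finset.sum_biUnion hFFdisj]
          have hterm : ∀ j : Fin k, ∑ e ∈ F (j : ℕ), G.edgeEnergy (S2Aux.ext G Wc) e ≤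
              (cc j) ^ 2 * (16 / (1 - (2 / 3 : ℝ) ^ α) ^ 2) := by
            intro j
            rw [Finset.sum_congr rfl (fun e he => henWc j e he), ← Finset.mul_sum]
            exact mul_le_mul_of_nonneg_left (hsumE (j : ℕ)) (sq_nonneg _)
          calc ∑ j : Fin k, ∑ e ∈ F (j : ℕ), G.edgeEnergy (S2Aux.ext G Wc) e
              ≤ ∑ j : Fin k, (cc j) ^ 2 * (16 / (1 - (2 / 3 : ℝ) ^ α) ^ 2) :=
                Finset.sum_le_sum fun j _ => hterm j
            _ = 16 / (1 - (2 / 3 : ℝ) ^ α) ^ 2 * ∑ j : Fin k, (cc j) ^ 2 := by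
                rw [Finset.mul_sum]
                exact Finset.sum_congr rfl fun j _ => mul_comm _ _
        rw [hl2c]
        exact hdc
    rw [MetricGraphOn.eigenOn]
    by_cases hbdd : BddBelow {μ : ℝ | ∃ φ : Fin k → X → ℝ,
        (∀ i, φ i ∈ {f | G.MemH1 f}) ∧
        LinearIndependent ℝ (fun i => (G.subgraphSet Set.univ).restrict (φ i)) ∧
        ∀ cc : Fin k → ℝ,
          G.derivNormSqOn Set.univ (∑ i, cc i • φ i) ≤
            μ * G.l2normSqOn Set.univ (∑ i, cc i • φ i)}
    · exact le_trans (csInf_le hbdd hmemS) (le_max_left _ _)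
    · rw [Real.sInf_of_not_bddBelow hbdd]
      exact le_max_right _ _
  refine ⟨⟨uu, hmemH1, hl2self, horth,
    ⟨1 + 16 / (1 - (2 / 3 : ℝ) ^ α) ^ 2, hh1⟩⟩, ?_⟩
  intro htend
  have htend' : Filter.Tendsto (fun k => G.eigenOn Set.univ {f | G.MemH1 f} k)
      atTop atTop := htend
  obtain ⟨k, hk⟩ := (htend'.eventually_ge_atTop
    (max (16 / (1 - (2 / 3 : ℝ) ^ α) ^ 2) 0 + 1)).exists
  linarith [hkey k]
end

section
/- Let G be a metric graph on a countable edge set, let f be a continuous function on G that is C^1 on each closed edge, and let φ ∈ L^1_loc(G) be nonnegative. Then ∫_G φ(x)|f'(x)| dx = ∫_ℝ Σ_{x ∈ S_t} φ(x) dt, where S_t = {x ∈ G : f(x) = t} denotes the level set of f at level t. -/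
open MeasureTheory Set Filter
open scoped ENNReal Topology

set_option maxHeartbeats 1000000

/-- One-dimensional coarea formula with multiplicity on an interval, for a C¹ function. -/
lemma edge_coarea_meas (L : ℝ) (hL : 0 < L) (g : ℝ → ℝ)
    (hg : ContDiffOn ℝ 1 g (Set.Icc 0 L)) (ψ : ℝ → ℝ≥0∞) (hψ : Measurable ψ) :
    ∃ B : ℝ → ℝ≥0∞, Measurable B ∧
      (∀ᵐ y, B y = ∑' s : {s : ℝ // s ∈ Ioo 0 L ∧ g s = y}, ψ s) ∧
      ∫⁻ s in Ioo 0 L, ψ s * ENNReal.ofReal |deriv g s| = ∫⁻ y, B y := by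
  classical
  have hIooIcc : Ioo (0:ℝ) L ⊆ Icc 0 L := Ioo_subset_Icc_self
  have hnhds : ∀ s ∈ Ioo (0:ℝ) L, Icc (0:ℝ) L ∈ 𝓝 s := fun s hs =>
    mem_nhds_iff.mpr ⟨Ioo 0 L, hIooIcc, isOpen_Ioo, hs⟩
  have hdiff : ∀ s ∈ Ioo (0:ℝ) L, DifferentiableAt ℝ g s := fun s hs =>
    ((hg.differentiableOn one_ne_zero) s (hIooIcc hs)).differentiableAt (hnhds s hs)
  have hderiv_cont : ContinuousOn (deriv g) (Ioo 0 L) := by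
    have h1 : ContinuousOn (derivWithin g (Icc 0 L)) (Icc 0 L) :=
      hg.continuousOn_derivWithin (uniqueDiffOn_Icc hL) le_rfl
    exact (h1.mono hIooIcc).congr fun s hs => (derivWithin_of_mem_nhds (hnhds s hs)).symm
  -- countable family of intervals on which `g` is injective
  set J : ℕ → Set ℝ := fun n =>
    (Encodable.decode₂ (ℚ × ℚ) n).elim ∅ fun p =>
      if Ioo ((p.1:ℝ)) ((p.2:ℝ)) ⊆ Ioo 0 L ∧ InjOn g (Ioo ((p.1:ℝ)) ((p.2:ℝ)))
      then Ioo ((p.1:ℝ)) ((p.2:ℝ)) else ∅ with hJdef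
  have hJ_cases : ∀ n, (J n ⊆ Ioo 0 L ∧ InjOn g (J n)) ∧ MeasurableSet (J n) := by
    intro n
    rw [hJdef]; dsimp only
    cases hdec : Encodable.decode₂ (ℚ × ℚ) n with
    | none =>
        simp only [Option.elim]
        exact ⟨⟨empty_subset _, fun a ha => absurd ha (notMem_empty a)⟩, MeasurableSet.empty⟩
    | some p =>
        simp only [Option.elim]
        split
        · next hcond => exact ⟨⟨hcond.1, hcond.2⟩, measurableSet_Ioo⟩
        · exact ⟨⟨empty_subset _, fun a ha => absurd ha (notMem_empty a)⟩, MeasurableSet.empty⟩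
  have hJ_sub : ∀ n, J n ⊆ Ioo 0 L := fun n => (hJ_cases n).1.1
  have hJ_inj : ∀ n, InjOn g (J n) := fun n => (hJ_cases n).1.2
  have hJ_meas : ∀ n, MeasurableSet (J n) := fun n => (hJ_cases n).2
  -- covering of the noncritical points
  have hcover : ∀ s ∈ Ioo (0:ℝ) L, deriv g s ≠ 0 → ∃ n, s ∈ J n := by
    intro s hs hne
    have hca : ContinuousAt (deriv g) s :=
      hderiv_cont.continuousAt (isOpen_Ioo.mem_nhds hs)
    have hmem : (Ioo 0 L ∩ deriv g ⁻¹' ({0}ᶜ)) ∈ 𝓝 s :=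
      inter_mem (isOpen_Ioo.mem_nhds hs) (hca.preimage_mem_nhds (compl_singleton_mem_nhds hne))
    obtain ⟨ε, hε, hball⟩ := Metric.mem_nhds_iff.mp hmem
    obtain ⟨a, ha1, ha2⟩ := exists_rat_btwn (show s - ε < s by linarith)
    obtain ⟨b, hb1, hb2⟩ := exists_rat_btwn (show s < s + ε by linarith)
    have hsub : Ioo (a:ℝ) (b:ℝ) ⊆ Ioo 0 L ∩ deriv g ⁻¹' ({0}ᶜ) := by
      refine subset_trans ?_ hball
      rw [Real.ball_eq_Ioo]
      exact Ioo_subset_Ioo ha1.le hb2.le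
    have hsub1 : Ioo (a:ℝ) b ⊆ Ioo 0 L := hsub.trans inter_subset_left
    have hne' : ∀ t ∈ Ioo (a:ℝ) b, deriv g t ≠ 0 := fun t ht => (hsub ht).2
    have hgcont : ContinuousOn g (Ioo (a:ℝ) b) := fun t ht =>
      ((hdiff t (hsub1 ht)).continuousAt).continuousWithinAt
    have hdc : ContinuousOn (deriv g) (Ioo (a:ℝ) b) := hderiv_cont.mono hsub1
    have hsmem : s ∈ Ioo (a:ℝ) b := ⟨ha2, hb1⟩
    -- constant sign of the derivative on `Ioo a b`
    have hsign : (∀ t ∈ Ioo (a:ℝ) b, 0 < deriv g t) ∨ (∀ t ∈ Ioo (a:ℝ) b, deriv g t < 0) := by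
      have hpc : IsPreconnected (deriv g '' Ioo (a:ℝ) b) :=
        isPreconnected_Ioo.image _ hdc
      have hoc := hpc.ordConnected
      rcases lt_or_gt_of_ne (hne' s hsmem) with hneg | hpos
      · right
        intro t ht
        rcases lt_or_gt_of_ne (hne' t ht) with h | h
        · exact h
        · exfalso
          have h0 : (0:ℝ) ∈ deriv g '' Ioo (a:ℝ) b :=
            hoc.out (mem_image_of_mem _ hsmem) (mem_image_of_mem _ ht) ⟨hneg.le, h.le⟩
          obtain ⟨u, hu, hu0⟩ := h0
          exact hne' u hu hu0
      · left
        intro t ht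
        rcases lt_or_gt_of_ne (hne' t ht) with h | h
        · exfalso
          have h0 : (0:ℝ) ∈ deriv g '' Ioo (a:ℝ) b :=
            hoc.out (mem_image_of_mem _ ht) (mem_image_of_mem _ hsmem) ⟨h.le, hpos.le⟩
          obtain ⟨u, hu, hu0⟩ := h0
          exact hne' u hu hu0
        · exact h
    have hinj : InjOn g (Ioo (a:ℝ) b) := by
      rcases hsign with hpos | hneg
      · exact (strictMonoOn_of_deriv_pos (convex_Ioo _ _) hgcont
          (fun t ht => hpos t (by rwa [interior_Ioo] at ht))).injOn
      · exact (strictAntiOn_of_deriv_neg (convex_Ioo _ _) hgcont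
          (fun t ht => hneg t (by rwa [interior_Ioo] at ht))).injOn
    refine ⟨Encodable.encode ((a, b) : ℚ × ℚ), ?_⟩
    rw [hJdef]; dsimp only
    rw [Encodable.decode₂_encode]
    simp only [Option.elim]
    rw [if_pos ⟨hsub1, hinj⟩]
    exact hsmem
  -- disjointify
  set K : ℕ → Set ℝ := disjointed J with hKdef
  have hK_meas : ∀ n, MeasurableSet (K n) := MeasurableSet.disjointed hJ_meas
  have hK_sub : ∀ n, K n ⊆ Ioo 0 L := fun n => (disjointed_subset J n).trans (hJ_sub n)
  have hK_inj : ∀ n, InjOn g (K n) := fun n => (hJ_inj n).mono (disjointed_subset J n)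
  have hK_disj : Pairwise (Function.onFun Disjoint K) := disjoint_disjointed J
  have hK_union : (⋃ n, K n) = ⋃ n, J n := iUnion_disjointed
  have hK_deriv : ∀ n, ∀ s ∈ K n,
      HasFDerivWithinAt g ((1 : ℝ →L[ℝ] ℝ).smulRight (deriv g s)) (K n) s := fun n s hs =>
    ((hdiff s (hK_sub n hs)).hasDerivAt.hasDerivWithinAt).hasFDerivWithinAt
  -- the critical set and Sard's lemma
  set Z : Set ℝ := Ioo 0 L \ ⋃ n, J n with hZdef
  have hZ_meas : MeasurableSet Z :=
    measurableSet_Ioo.diff (MeasurableSet.iUnion hJ_meas)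
  have hZ_crit : ∀ s ∈ Z, deriv g s = 0 := by
    intro s hs
    by_contra hne
    exact hs.2 (mem_iUnion.mpr (hcover s hs.1 hne))
  have hZ_null : volume (g '' Z) = 0 := by
    refine addHaar_image_eq_zero_of_det_fderivWithin_eq_zero volume
      (f' := fun s => (1 : ℝ →L[ℝ] ℝ).smulRight (deriv g s)) ?_ ?_
    · exact fun s hs =>
        ((hdiff s hs.1).hasDerivAt.hasDerivWithinAt).hasFDerivWithinAt
    · intro s hs
      rw [ContinuousLinearMap.smulRight_one_eq_toSpanSingleton, ContinuousLinearMap.det_toSpanSingleton, hZ_crit s hs]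
  -- measurable embeddings and the pushforward functions
  have hK_emb : ∀ n, MeasurableEmbedding ((K n).restrict g) := fun n =>
    measurableEmbedding_of_fderivWithin (hK_meas n) (hK_deriv n) (hK_inj n)
  set h : ℕ → ℝ → ℝ≥0∞ := fun n =>
    Function.extend ((K n).restrict g) (fun s => ψ s) (fun _ => 0) with hhdef
  have hh_meas : ∀ n, Measurable (h n) := fun n =>
    (hK_emb n).measurable_extend (hψ.comp measurable_subtype_coe) measurable_const
  have hrestr_inj : ∀ n, Function.Injective ((K n).restrict g) := fun n =>
    (injOn_iff_injective).mp (hK_inj n)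
  have hh_apply : ∀ n, ∀ s ∈ K n, h n (g s) = ψ s := by
    intro n s hs
    exact (hrestr_inj n).extend_apply (fun s : (K n) => ψ (s : ℝ)) (fun _ => 0) ⟨s, hs⟩
  have hh_zero : ∀ n, ∀ y, y ∉ g '' K n → h n y = 0 := by
    intro n y hy
    rw [hhdef]; dsimp only
    rw [Function.extend_apply']
    rintro ⟨⟨s, hs⟩, rfl⟩
    exact hy (mem_image_of_mem g hs)
  have him_meas : ∀ n, MeasurableSet (g '' K n) := by
    intro n
    have := (hK_emb n).measurableSet_range
    change MeasurableSet (range ((K n).domRestrict g)) at this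
    rwa [range_domRestrict] at this
  -- change of variables on each piece
  have hchg : ∀ n, ∫⁻ s in K n, ψ s * ENNReal.ofReal |deriv g s| = ∫⁻ y, h n y := by
    intro n
    have h1 : ∫⁻ y, h n y = ∫⁻ y in g '' K n, h n y := by
      rw [← lintegral_indicator (him_meas n)]
      refine lintegral_congr fun y => ?_
      by_cases hy : y ∈ g '' K n
      · rw [indicator_of_mem hy]
      · rw [indicator_of_notMem hy, hh_zero n y hy]
    rw [h1, lintegral_image_eq_lintegral_abs_det_fderiv_mul volume (hK_meas n)
      (hK_deriv n) (hK_inj n) (h n)]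
    refine setLIntegral_congr_fun (hK_meas n) (fun s hs => ?_)
    rw [ContinuousLinearMap.smulRight_one_eq_toSpanSingleton, ContinuousLinearMap.det_toSpanSingleton, hh_apply n s hs, mul_comm]
  -- the candidate function B
  refine ⟨fun y => ∑' n, h n y, Measurable.ennreal_tsum hh_meas, ?_, ?_⟩
  · -- a.e. identification with the level-set sum
    have hae : ∀ᵐ y, y ∉ g '' Z := measure_eq_zero_iff_ae_notMem.mp hZ_null
    filter_upwards [hae] with y hy
    have hterm : ∀ s : {s : ℝ // s ∈ Ioo 0 L ∧ g s = y},
        (∑' n, (K n).indicator ψ (s : ℝ)) = ψ (s : ℝ) := by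
      rintro ⟨s, hs, hgs⟩
      have hsZ : s ∉ Z := fun h => hy ⟨s, h, hgs⟩
      have hsU : s ∈ ⋃ n, K n := by
        rw [hK_union]
        by_contra h
        exact hsZ ⟨hs, h⟩
      obtain ⟨n₀, hn₀⟩ := mem_iUnion.mp hsU
      rw [tsum_eq_single n₀]
      · exact indicator_of_mem hn₀ ψ
      · intro m hm
        refine indicator_of_notMem (fun hsm => ?_) ψ
        exact (hK_disj hm).le_bot ⟨hsm, hn₀⟩
    calc (∑' n, h n y)
        = ∑' n, ∑' s : {s : ℝ // s ∈ Ioo 0 L ∧ g s = y}, (K n).indicator ψ (s : ℝ) := by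
          refine tsum_congr fun n => ?_
          by_cases hex : ∃ s₀ : {s : ℝ // s ∈ Ioo 0 L ∧ g s = y}, (s₀ : ℝ) ∈ K n
          · obtain ⟨s₀, hs₀⟩ := hex
            rw [tsum_eq_single s₀]
            · have hval := hh_apply n (s₀ : ℝ) hs₀
              rw [s₀.2.2] at hval
              rw [indicator_of_mem hs₀, hval]
            · rintro ⟨s, hs, hgs⟩ hne
              refine indicator_of_notMem (fun hsm => hne ?_) ψ
              have : s = (s₀ : ℝ) := hK_inj n hsm hs₀ (by rw [hgs, s₀.2.2])
              exact Subtype.ext this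
          · have hzero : h n y = 0 := by
              refine hh_zero n y fun ⟨s, hsK, hgs⟩ => hex ⟨⟨s, hK_sub n hsK, hgs⟩, hsK⟩
            rw [hzero]
            symm
            rw [ENNReal.tsum_eq_zero]
            rintro ⟨s, hs, hgs⟩
            exact indicator_of_notMem (fun hsm => hex ⟨⟨s, hs, hgs⟩, hsm⟩) ψ
      _ = ∑' s : {s : ℝ // s ∈ Ioo 0 L ∧ g s = y}, ∑' n, (K n).indicator ψ (s : ℝ) :=
          ENNReal.tsum_comm
      _ = ∑' s : {s : ℝ // s ∈ Ioo 0 L ∧ g s = y}, ψ (s : ℝ) := tsum_congr hterm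
  · -- the integral identity
    have hdecomp : Ioo (0:ℝ) L = (⋃ n, K n) ∪ Z := by
      rw [hK_union, hZdef, union_diff_self, union_eq_self_of_subset_left]
      exact iUnion_subset hJ_sub
    have hdisj : Disjoint (⋃ n, K n) Z := by
      rw [hK_union]
      exact disjoint_sdiff_right
    rw [hdecomp, lintegral_union hZ_meas hdisj]
    have hZ0 : ∫⁻ s in Z, ψ s * ENNReal.ofReal |deriv g s| = 0 := by
      rw [setLIntegral_congr_fun hZ_meas (fun s hs => ?_),
        lintegral_zero]
      rw [hZ_crit s hs, abs_zero, ENNReal.ofReal_zero, mul_zero]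
    rw [hZ0, add_zero, lintegral_iUnion hK_meas hK_disj]
    calc (∑' n, ∫⁻ s in K n, ψ s * ENNReal.ofReal |deriv g s|)
        = ∑' n, ∫⁻ y, h n y := tsum_congr hchg
      _ = ∫⁻ y, ∑' n, h n y := (lintegral_tsum fun n => (hh_meas n).aemeasurable).symm

/-- Version of `edge_coarea_meas` for an a.e. measurable weight. -/
lemma edge_coarea (L : ℝ) (hL : 0 < L) (g : ℝ → ℝ)
    (hg : ContDiffOn ℝ 1 g (Set.Icc 0 L)) (ψ : ℝ → ℝ≥0∞)
    (hψ : AEMeasurable ψ (volume.restrict (Ioo 0 L))) :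
    ∃ B : ℝ → ℝ≥0∞, Measurable B ∧
      (∀ᵐ y, B y = ∑' s : {s : ℝ // s ∈ Ioo 0 L ∧ g s = y}, ψ s) ∧
      ∫⁻ s in Ioo 0 L, ψ s * ENNReal.ofReal |deriv g s| = ∫⁻ y, B y := by
  classical
  set ψ' : ℝ → ℝ≥0∞ := hψ.mk ψ with hψ'def
  have hψ'meas : Measurable ψ' := hψ.measurable_mk
  have hae : ψ =ᵐ[volume.restrict (Ioo 0 L)] ψ' := hψ.ae_eq_mk
  -- the set where ψ and ψ' differ, inside the interval
  have hnull : volume ({s | ψ s ≠ ψ' s} ∩ Ioo 0 L) = 0 := by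
    have := ae_iff.mp hae
    rwa [Measure.restrict_apply' measurableSet_Ioo] at this
  set N : Set ℝ := toMeasurable volume ({s | ψ s ≠ ψ' s} ∩ Ioo 0 L) ∩ Ioo 0 L with hNdef
  have hN_meas : MeasurableSet N :=
    (measurableSet_toMeasurable _ _).inter measurableSet_Ioo
  have hN_null : volume N = 0 := by
    refine le_antisymm ?_ zero_le
    calc volume N ≤ volume (toMeasurable volume ({s | ψ s ≠ ψ' s} ∩ Ioo 0 L)) :=
          measure_mono inter_subset_left
      _ = 0 := by rw [measure_toMeasurable, hnull]
  have hN_sub : {s | ψ s ≠ ψ' s} ∩ Ioo 0 L ⊆ N :=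
    subset_inter (subset_toMeasurable _ _) inter_subset_right
  -- the image of N under g is null
  have hIooIcc : Ioo (0:ℝ) L ⊆ Icc 0 L := Ioo_subset_Icc_self
  have hdiffN : DifferentiableOn ℝ g N := by
    intro s hs
    have hs' : s ∈ Ioo 0 L := hs.2
    have : DifferentiableAt ℝ g s :=
      ((hg.differentiableOn one_ne_zero) s (hIooIcc hs')).differentiableAt
        (mem_nhds_iff.mpr ⟨Ioo 0 L, hIooIcc, isOpen_Ioo, hs'⟩)
    exact this.differentiableWithinAt
  have hNim_null : volume (g '' N) = 0 :=
    addHaar_image_eq_zero_of_differentiableOn_of_addHaar_eq_zero volume hdiffN hN_null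
  obtain ⟨B, hBmeas, hBae, hBint⟩ := edge_coarea_meas L hL g hg ψ' hψ'meas
  refine ⟨B, hBmeas, ?_, ?_⟩
  · have hae2 : ∀ᵐ y, y ∉ g '' N := measure_eq_zero_iff_ae_notMem.mp hNim_null
    filter_upwards [hBae, hae2] with y h1 h2
    rw [h1]
    refine tsum_congr fun s => ?_
    by_cases hne : ψ (s : ℝ) = ψ' (s : ℝ)
    · exact hne.symm
    · exact absurd (mem_image_of_mem g (hN_sub ⟨hne, s.2.1⟩) : g (s:ℝ) ∈ g '' N)
        (by rw [s.2.2]; exact h2)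
  · rw [← hBint]
    refine lintegral_congr_ae ?_
    filter_upwards [hae] with s hs
    rw [hs]


open MetricGraphOn in
/-- Coarea formula for infinite metric graphs. Let `G` be a metric
graph on a countable edge set, let `f` be continuous on `G` and `C¹` on each closed
edge, and let `φ ∈ L¹_loc(G)` be nonnegative. Then
`∫_G φ(x)|f'(x)| dx = ∫_ℝ Σ_{x ∈ S_t} φ(x) dt`, where `S_t = {x : f x = t}`. -/
theorem statement11 (X : Type) [MetricSpace X] (G : MetricGraphOn X)
    (f : X → ℝ) (hf : Continuous f)
    (hC1 : ∀ e : G.E, ContDiffOn ℝ 1 (f ∘ G.edgeMap e) (Set.Icc 0 (G.len e)))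
    (φ : X → ℝ) (hφ0 : ∀ x, 0 ≤ φ x)
    (hφloc : ∀ e : G.E, IntegrableOn (fun t => φ (G.edgeMap e t)) (Ioo 0 (G.len e))) :
    (∑' e : G.E, ∫⁻ t in Ioo 0 (G.len e),
        ENNReal.ofReal (φ (G.edgeMap e t) * |G.edgeDeriv f e t|)) =
      ∫⁻ t : ℝ, ∑' x : {x : X | f x = t}, ENNReal.ofReal (φ (x : X)) := by
    classical
  haveI := G.countableE
  haveI := G.countableV
  have hedge : ∀ e : G.E, ∃ B : ℝ → ℝ≥0∞, Measurable B ∧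
      (∀ᵐ y : ℝ, B y = ∑' s : {s : ℝ // s ∈ Ioo 0 (G.len e) ∧ (f ∘ G.edgeMap e) s = y},
        ENNReal.ofReal (φ (G.edgeMap e (s : ℝ)))) ∧
      ∫⁻ t in Ioo 0 (G.len e),
          ENNReal.ofReal (φ (G.edgeMap e t)) * ENNReal.ofReal |deriv (f ∘ G.edgeMap e) t|
        = ∫⁻ y, B y := fun e =>
    edge_coarea (G.len e) (G.len_pos e) (f ∘ G.edgeMap e) (hC1 e)
      (fun t => ENNReal.ofReal (φ (G.edgeMap e t)))
      ((hφloc e).aemeasurable.ennreal_ofReal)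
  choose B hBmeas hBae hBint using hedge
  have hLHS : ∀ e : G.E, (∫⁻ t in Ioo 0 (G.len e),
      ENNReal.ofReal (φ (G.edgeMap e t) * |G.edgeDeriv f e t|)) = ∫⁻ y, B e y := by
    intro e
    rw [← hBint e]
    refine lintegral_congr fun t => ?_
    rw [ENNReal.ofReal_mul (hφ0 _)]
    rfl
  have hVF : volume (f '' Set.range G.vertexMap) = 0 :=
    ((countable_range G.vertexMap).image f).measure_zero _
  have haeV : ∀ᵐ y : ℝ, y ∉ f '' Set.range G.vertexMap := measure_eq_zero_iff_ae_notMem.mp hVF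
  have haeB : ∀ᵐ y : ℝ, ∀ e : G.E,
      B e y = ∑' s : {s : ℝ // s ∈ Ioo 0 (G.len e) ∧ (f ∘ G.edgeMap e) s = y},
        ENNReal.ofReal (φ (G.edgeMap e (s : ℝ))) := ae_all_iff.mpr hBae
  calc (∑' e : G.E, ∫⁻ t in Ioo 0 (G.len e),
        ENNReal.ofReal (φ (G.edgeMap e t) * |G.edgeDeriv f e t|))
      = ∑' e : G.E, ∫⁻ y, B e y := tsum_congr hLHS
    _ = ∫⁻ y, ∑' e : G.E, B e y := (lintegral_tsum fun e => (hBmeas e).aemeasurable).symm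
    _ = ∫⁻ y : ℝ, ∑' x : {x : X | f x = y}, ENNReal.ofReal (φ (x : X)) := by
        refine lintegral_congr_ae ?_
        filter_upwards [haeB, haeV] with y h1 h2
        rw [tsum_congr h1]
        -- the level set decomposes over edge interiors
        have hmap : ∀ p : Σ e : G.E,
            {s : ℝ // s ∈ Ioo 0 (G.len e) ∧ (f ∘ G.edgeMap e) s = y},
            f (G.edgeMap p.1 (p.2 : ℝ)) = y := fun p => p.2.2.2
        set Φ : (Σ e : G.E, {s : ℝ // s ∈ Ioo 0 (G.len e) ∧ (f ∘ G.edgeMap e) s = y}) →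
            {x : X | f x = y} := fun p => ⟨G.edgeMap p.1 (p.2 : ℝ), hmap p⟩ with hΦdef
        have hbij : Function.Bijective Φ := by
          constructor
          · rintro ⟨e, s, hs, hgs⟩ ⟨e', s', hs', hgs'⟩ hpq
            have hx : G.edgeMap e s = G.edgeMap e' s' := congrArg Subtype.val hpq
            by_cases hee : e = e'
            · subst hee
              have hss : s = s' := G.edgeMap_injOn e ⟨hs.1.le, hs.2⟩ ⟨hs'.1.le, hs'.2⟩ hx
              subst hss
              rfl
            · exact absurd hx (G.interior_disjoint e e' hee s hs s' hs')
          · rintro ⟨x, hx⟩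
            have hfx : f x = y := hx
            obtain ⟨e, t, ht, hte⟩ := G.cover x
            have ht0 : t ≠ 0 := by
              rintro rfl
              refine h2 ⟨G.vertexMap (G.endpoint e false), ⟨_, rfl⟩, ?_⟩
              rw [← G.edgeMap_zero, hte, hfx]
            have htL : t ≠ G.len e := by
              intro h
              refine h2 ⟨G.vertexMap (G.endpoint e true), ⟨_, rfl⟩, ?_⟩
              rw [← G.edgeMap_len, ← h, hte, hfx]
            have htIoo : t ∈ Ioo 0 (G.len e) :=
              ⟨lt_of_le_of_ne ht.1 (Ne.symm ht0), lt_of_le_of_ne ht.2 htL⟩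
            refine ⟨⟨e, ⟨t, htIoo, ?_⟩⟩, Subtype.ext hte⟩
            show f (G.edgeMap e t) = y
            rw [hte, hfx]
        calc (∑' e : G.E, ∑' s : {s : ℝ // s ∈ Ioo 0 (G.len e) ∧ (f ∘ G.edgeMap e) s = y},
              ENNReal.ofReal (φ (G.edgeMap e (s : ℝ))))
            = ∑' p : (Σ e : G.E,
                {s : ℝ // s ∈ Ioo 0 (G.len e) ∧ (f ∘ G.edgeMap e) s = y}),
                ENNReal.ofReal (φ (G.edgeMap p.1 (p.2 : ℝ))) :=
              (ENNReal.tsum_sigma fun (e : G.E) (s : {s : ℝ // s ∈ Ioo 0 (G.len e) ∧ (f ∘ G.edgeMap e) s = y}) => ENNReal.ofReal (φ (G.edgeMap e (s : ℝ)))).symm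
          _ = ∑' x : {x : X | f x = y}, ENNReal.ofReal (φ (x : X)) :=
              (Equiv.ofBijective Φ hbij).tsum_eq fun x : {x : X | f x = y} =>
                ENNReal.ofReal (φ (x : X))
end
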